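/- arXiv:1707.09579 — 4 statements merged into one kernel-verified Lean document; each statement's English description precedes it below -/
import Mathlib

section
/- Every tree-child network has exactly one automorphism that fixes its leaf set (namely the identity); consequently, no two distinct vertices and no two distinct edges of a tree-child network are exchanged by any leaf-label-preserving symmetry. -/
/-!
Formalization of rooted binary phylogenetic networks (directed multigraphs with
labelled leaves), tree-child networks, and the SNPR / SNPR+ / SNPR− rearrangement
operations, following Klawitter, "The SNPR neighbourhood of tree-child networks".
-/

noncomputable section

attribute [local instance] Classical.propDecidable

/-- Raw data of a (rooted, binary) phylogenetic network on `n` taxa: a finite vertex set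
(vertices are natural numbers), a multiset of directed edges (parallel edges allowed),
a distinguished root, and an injective labelling of the leaves by `Fin n`. -/
structure RawNet (n : ℕ) where
  V : Finset ℕ
  E : Multiset (ℕ × ℕ)
  root : ℕ
  leaf : Fin n → ℕ

namespace RawNet

variable {n : ℕ}

/-- Adjacency: there is an edge from `a` to `b`. -/
def Adj (N : RawNet n) (a b : ℕ) : Prop := (a, b) ∈ N.E

/-- In-degree of a vertex (counting parallel edges). -/
def inDeg (N : RawNet n) (v : ℕ) : ℕ := (N.E.filter (fun e => e.2 = v)).card

/-- Out-degree of a vertex (counting parallel edges). -/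
def outDeg (N : RawNet n) (v : ℕ) : ℕ := (N.E.filter (fun e => e.1 = v)).card

/-- `v` is a reticulation (in-degree two). -/
def IsRet (N : RawNet n) (v : ℕ) : Prop := N.inDeg v = 2

/-- Edge `g` is a descendant of edge `e`: `g` starts at the head of `e` or at a vertex
reachable from the head of `e` by a directed path. -/
def EdgeDesc (N : RawNet n) (e g : ℕ × ℕ) : Prop :=
  g.1 = e.2 ∨ Relation.TransGen N.Adj e.2 g.1

/-- `δ(e)`: the number of descendant edges of `e`. -/
def delta (N : RawNet n) (e : ℕ × ℕ) : ℕ :=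
  (N.E.filter (fun g => N.EdgeDesc e g)).card

/-- `δ_T(e)`: the number of descendant tree edges of `e`. -/
def deltaT (N : RawNet n) (e : ℕ × ℕ) : ℕ :=
  (N.E.filter (fun g => N.EdgeDesc e g ∧ ¬ N.IsRet g.2)).card

/-- `N` is a valid rooted binary phylogenetic network: a DAG whose root has in-degree 0 and
out-degree 1, whose `n` leaves (in-degree 1, out-degree 0) are bijectively labelled, and all
of whose other vertices are inner tree vertices (in 1, out 2) or reticulations (in 2, out 1). -/
structure IsPhylo (N : RawNet n) : Prop where
  edge_mem : ∀ e ∈ N.E, e.1 ∈ N.V ∧ e.2 ∈ N.V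
  acyclic : ∀ v, ¬ Relation.TransGen N.Adj v v
  root_mem : N.root ∈ N.V
  root_in : N.inDeg N.root = 0
  root_out : N.outDeg N.root = 1
  leaf_mem : ∀ i, N.leaf i ∈ N.V
  leaf_inj : Function.Injective N.leaf
  leaf_in : ∀ i, N.inDeg (N.leaf i) = 1
  leaf_out : ∀ i, N.outDeg (N.leaf i) = 0
  classify : ∀ v ∈ N.V, v = N.root ∨ (∃ i, v = N.leaf i) ∨
    (N.inDeg v = 1 ∧ N.outDeg v = 2) ∨ (N.inDeg v = 2 ∧ N.outDeg v = 1)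

/-- Tree-child: every non-leaf vertex has a child that is a tree vertex. -/
def TreeChild (N : RawNet n) : Prop :=
  ∀ v ∈ N.V, 1 ≤ N.outDeg v → ∃ w, (v, w) ∈ N.E ∧ ¬ N.IsRet w

/-- Isomorphism of networks fixing the labelled leaves (and the root). -/
def Iso (A B : RawNet n) : Prop :=
  ∃ φ : ℕ → ℕ, Set.BijOn φ ↑A.V ↑B.V ∧
    B.E = A.E.map (fun p => (φ p.1, φ p.2)) ∧
    φ A.root = B.root ∧ ∀ i, φ (A.leaf i) = B.leaf i

/-- The network resulting from the SNPR operation that prunes the edge `(u,v)` (where `u` has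
parent edge `(a,u)` and sibling edge `(u,w)`) and regrafts it to the edge `(x,y)`, using the
fresh vertex `u''` to subdivide the regraft edge.  If the regraft edge is the parent or
sibling edge of `u`, it has become the edge `(a,w)` after suppressing `u`. -/
def snprResult (N : RawNet n) (u v a w x y u'' : ℕ) : RawNet n :=
  let E1 : Multiset (ℕ × ℕ) := (((N.E.erase (u, v)).erase (a, u)).erase (u, w)) + {(a, w)}
  let f : ℕ × ℕ := if (x, y) = (a, u) ∨ (x, y) = (u, w) then (a, w) else (x, y)
  { V := insert u'' (N.V.erase u)
    E := (E1.erase f) + {(f.1, u''), (u'', f.2), (u'', v)}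
    root := N.root
    leaf := N.leaf }

/-- The network resulting from the SNPR+ operation `(e,f)`: subdivide `f` with `u'` and `e`
with `v'` and add the edge `(u',v')`; if `e = f`, subdivide `e` twice (with `u'` the parent
of `v'`) and add the (parallel) edge `(u',v')`. -/
def snprPlusResult (N : RawNet n) (e f : ℕ × ℕ) (u' v' : ℕ) : RawNet n :=
  if e = f then
    { V := insert u' (insert v' N.V)
      E := (N.E.erase e) + {(e.1, u'), (u', v'), (u', v'), (v', e.2)}
      root := N.root
      leaf := N.leaf }
  else
    { V := insert u' (insert v' N.V)
      E := ((N.E.erase e).erase f) + {(e.1, v'), (v', e.2), (f.1, u'), (u', f.2), (u', v')}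
      root := N.root
      leaf := N.leaf }

/-- The network resulting from the SNPR− operation deleting the reticulation edge `(u,v)`
and suppressing `u` and `v`; here `(a,u)` is the parent edge of `u`, `(u,w)` the other child
edge of `u`, `(c,v)` the other parent edge of `v`, and `(v,z)` the child edge of `v`.
(If `(u,v)` is one of a pair of parallel edges, i.e. `c = u`, suppressing merges into `(a,z)`.) -/
def snprMinusResult (N : RawNet n) (u v a w c z : ℕ) : RawNet n :=
  if u = c then
    { V := (N.V.erase u).erase v
      E := ((((N.E.erase (u, v)).erase (u, v)).erase (a, u)).erase (v, z)) + {(a, z)}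
      root := N.root
      leaf := N.leaf }
  else
    { V := (N.V.erase u).erase v
      E := (((((N.E.erase (u, v)).erase (a, u)).erase (u, w)).erase (c, v)).erase (v, z))
            + {(a, w), (c, z)}
      root := N.root
      leaf := N.leaf }

/-- `(e,f)` is a tree-child respecting SNPR operation on `N` (with `f` an edge other than `e`,
which is expressed by taking `f` from `N.E.erase e` wherever this predicate is used). -/
def SNPRtcCond (N : RawNet n) (e f : ℕ × ℕ) : Prop :=
  N.inDeg e.1 = 1 ∧ ¬ N.EdgeDesc e f ∧
  ∃ a w u'', (a, e.1) ∈ N.E ∧ (e.1, w) ∈ N.E.erase e ∧ u'' ∉ N.V ∧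
    (N.snprResult e.1 e.2 a w f.1 f.2 u'').TreeChild

/-- The number of tree-child respecting SNPR operations on `N`
(operations are pairs of edges, counted with multiplicity). -/
def numSNPRtc (N : RawNet n) : ℕ :=
  (N.E.map (fun e => ((N.E.erase e).filter (fun f => N.SNPRtcCond e f)).card)).sum

/-- `(e,f)` is a trivial tree-child respecting SNPR operation on `N`. -/
def SNPRtrivCond (N : RawNet n) (e f : ℕ × ℕ) : Prop :=
  N.inDeg e.1 = 1 ∧ ¬ N.EdgeDesc e f ∧
  ∃ a w u'', (a, e.1) ∈ N.E ∧ (e.1, w) ∈ N.E.erase e ∧ u'' ∉ N.V ∧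
    (N.snprResult e.1 e.2 a w f.1 f.2 u'').TreeChild ∧
    (N.snprResult e.1 e.2 a w f.1 f.2 u'').Iso N

/-- The number of trivial tree-child respecting SNPR operations on `N`. -/
def numSNPRtcTrivial (N : RawNet n) : ℕ :=
  (N.E.map (fun e => ((N.E.erase e).filter (fun f => N.SNPRtrivCond e f)).card)).sum

/-- `(e,f)` is a tree-child respecting SNPR+ operation on `N`. -/
def SNPRplusTcCond (N : RawNet n) (e f : ℕ × ℕ) : Prop :=
  ¬ N.IsRet e.1 ∧ ¬ N.EdgeDesc e f ∧
  ∃ u' v', u' ∉ N.V ∧ v' ∉ N.V ∧ u' ≠ v' ∧ (N.snprPlusResult e f u' v').TreeChild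

/-- The number of tree-child respecting SNPR+ operations on `N`. -/
def numSNPRplusTc (N : RawNet n) : ℕ :=
  (N.E.map (fun e => (N.E.filter (fun f => N.SNPRplusTcCond e f)).card)).sum

/-- `e` induces a tree-child respecting SNPR− operation on `N`. -/
def SNPRminusTcCond (N : RawNet n) (e : ℕ × ℕ) : Prop :=
  N.IsRet e.2 ∧ ¬ N.IsRet e.1 ∧
  ∃ a w c z, (a, e.1) ∈ N.E ∧ (e.1, w) ∈ N.E.erase e ∧ (c, e.2) ∈ N.E.erase e ∧
    (e.2, z) ∈ N.E ∧ (N.snprMinusResult e.1 e.2 a w c z).TreeChild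

/-- The number of tree-child respecting SNPR− operations on `N`. -/
def numSNPRminusTc (N : RawNet n) : ℕ :=
  (N.E.filter (fun e => N.SNPRminusTcCond e)).card

/-- `M` is the (concrete) result of applying one SNPR operation to `N`. -/
def IsSNPRres (N M : RawNet n) : Prop :=
  ∃ e f a w u'', e ∈ N.E ∧ f ∈ N.E.erase e ∧ N.inDeg e.1 = 1 ∧ ¬ N.EdgeDesc e f ∧
    (a, e.1) ∈ N.E ∧ (e.1, w) ∈ N.E.erase e ∧ u'' ∉ N.V ∧
    M = N.snprResult e.1 e.2 a w f.1 f.2 u''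

/-- `M` is the (concrete) result of applying one SNPR+ operation to `N`. -/
def IsSNPRplusRes (N M : RawNet n) : Prop :=
  ∃ e f u' v', e ∈ N.E ∧ f ∈ N.E ∧ ¬ N.IsRet e.1 ∧ ¬ N.EdgeDesc e f ∧
    u' ∉ N.V ∧ v' ∉ N.V ∧ u' ≠ v' ∧ M = N.snprPlusResult e f u' v'

/-- `M` is the (concrete) result of applying one SNPR− operation to `N`. -/
def IsSNPRminusRes (N M : RawNet n) : Prop :=
  ∃ e a w c z, e ∈ N.E ∧ N.IsRet e.2 ∧ ¬ N.IsRet e.1 ∧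
    (a, e.1) ∈ N.E ∧ (e.1, w) ∈ N.E.erase e ∧ (c, e.2) ∈ N.E.erase e ∧ (e.2, z) ∈ N.E ∧
    M = N.snprMinusResult e.1 e.2 a w c z

/-- `M` is the result of one operation of type SNPR, SNPR+ or SNPR−. -/
def IsAnyRes (N M : RawNet n) : Prop :=
  N.IsSNPRres M ∨ N.IsSNPRplusRes M ∨ N.IsSNPRminusRes M

/-- The neighbourhood of `N` with respect to a one-step result relation `P` — i.e. the set of
tree-child networks, other than `N` itself, obtainable from `N` by exactly one operation,
counted up to leaf-label-preserving isomorphism — has exactly `k` elements. -/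
def NbhdSizeIs (N : RawNet n) (P : RawNet n → RawNet n → Prop) (k : ℕ) : Prop :=
  ∃ L : List (RawNet n), L.length = k ∧ L.Pairwise (fun A B => ¬ A.Iso B) ∧
    (∀ M ∈ L, P N M ∧ M.TreeChild ∧ ¬ M.Iso N) ∧
    (∀ M, P N M → M.TreeChild → ¬ M.Iso N → ∃ M' ∈ L, M.Iso M')

/-- Number of reticulations `r`. -/
def numRet (N : RawNet n) : ℕ := (N.V.filter (fun v => N.IsRet v)).card

/-- `r₁`: number of reticulations whose child is a leaf. -/
def numR1 (N : RawNet n) : ℕ :=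
  (N.V.filter (fun v => N.IsRet v ∧ ∃ w, (v, w) ∈ N.E ∧ N.outDeg w = 0)).card

/-- `r₂`: number of `r₂` structures (a directed path reticulation → `u` → reticulation),
counted by the middle vertex `u`. -/
def numR2 (N : RawNet n) : ℕ :=
  (N.V.filter (fun u => (∃ x, (x, u) ∈ N.E ∧ N.IsRet x) ∧
    ∃ w, (u, w) ∈ N.E ∧ N.IsRet w)).card

/-- `r₃`: number of `r₃` structures (edges `(x,y), (x,u), (u,w)` with `y, w` reticulations),
counted by the middle vertex `u`. -/
def numR3 (N : RawNet n) : ℕ :=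
  (N.V.filter (fun u => (∃ x y, (x, u) ∈ N.E ∧ (x, y) ∈ N.E.erase (x, u) ∧ N.IsRet y) ∧
    ∃ w, (u, w) ∈ N.E ∧ N.IsRet w)).card

/-- `Δ`: number of triangles (edges `(x,u), (u,w), (x,w)`), counted by the middle vertex `u`. -/
def numTri (N : RawNet n) : ℕ :=
  (N.V.filter (fun u => ∃ x w, (x, u) ∈ N.E ∧ (u, w) ∈ N.E ∧ (x, w) ∈ N.E)).card

/-- `Δ*`: number of tree-branching triangles (the second child `v` of the middle vertex `u`
is incident to three pure tree edges). -/
def numTriStar (N : RawNet n) : ℕ :=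
  (N.V.filter (fun u => ∃ x w v, (x, u) ∈ N.E ∧ (u, w) ∈ N.E ∧ (x, w) ∈ N.E ∧
    (u, v) ∈ N.E.erase (u, w) ∧ N.inDeg v = 1 ∧ N.outDeg v = 2 ∧
    ∀ z, (v, z) ∈ N.E → ¬ N.IsRet z)).card

/-- `D`: number of diamonds (edges `(u,v), (u,w), (v,z), (w,z)` with `v ≠ w`),
counted by the top vertex `u`. -/
def numDia (N : RawNet n) : ℕ :=
  (N.V.filter (fun u => ∃ v w z, v ≠ w ∧ (u, v) ∈ N.E ∧ (u, w) ∈ N.E ∧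
    (v, z) ∈ N.E ∧ (w, z) ∈ N.E)).card

/-- `T`: number of trapezoids (edges `(u,v), (v,w), (w,z), (u,z)`) whose outgoing edges at
`v` and `w` are pure tree edges, counted by the top vertex `u`. -/
def numTrap (N : RawNet n) : ℕ :=
  (N.V.filter (fun u => ∃ v w z, (u, v) ∈ N.E ∧ (v, w) ∈ N.E ∧ (w, z) ∈ N.E ∧
    (u, z) ∈ N.E ∧ (∃ v', (v, v') ∈ N.E.erase (v, w) ∧ ¬ N.IsRet v') ∧
    (∃ w', (w, w') ∈ N.E.erase (w, z) ∧ ¬ N.IsRet w'))).card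

/-- `e` is a critical edge: the tree edge from the middle tree vertex of an `r₂` or `r₃`
structure (or triangle) to its second child. -/
def Critical (N : RawNet n) (e : ℕ × ℕ) : Prop :=
  ¬ N.IsRet e.2 ∧ (∃ w, (e.1, w) ∈ N.E ∧ N.IsRet w) ∧
  ((∃ x, (x, e.1) ∈ N.E ∧ N.IsRet x) ∨
   (∃ x y, (x, e.1) ∈ N.E ∧ (x, y) ∈ N.E.erase (x, e.1) ∧ N.IsRet y))

/-- `e` is a pure tree edge (both endpoints are tree vertices and its head is a tree vertex). -/
def PureTree (N : RawNet n) (e : ℕ × ℕ) : Prop := ¬ N.IsRet e.1 ∧ ¬ N.IsRet e.2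

/-- `Σ_{e ∈ E_{T*}} δ(e)`: sum of `δ` over the pure non-critical tree edges. -/
def sumDeltaTstar (N : RawNet n) : ℕ :=
  ((N.E.filter (fun e => N.PureTree e ∧ ¬ N.Critical e)).map (fun e => N.delta e)).sum

/-- `Σ_{e ∈ E_R} δ_T(e)`: sum of `δ_T` over the reticulation edges. -/
def sumDeltaT_R (N : RawNet n) : ℕ :=
  ((N.E.filter (fun e => N.IsRet e.2)).map (fun e => N.deltaT e)).sum

/-- `e` is the bottom side of a triangle. -/
def TriBottom (N : RawNet n) (e : ℕ × ℕ) : Prop := ∃ x, (x, e.1) ∈ N.E ∧ (x, e.2) ∈ N.E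

/-- `Σ_{e ∈ E_Δ} δ_T(e)`: sum of `δ_T` over the bottom sides of triangles. -/
def sumDeltaT_Tri (N : RawNet n) : ℕ :=
  ((N.E.filter (fun e => N.TriBottom e)).map (fun e => N.deltaT e)).sum

/-- `e` is a pure tree edge whose sibling edge is also a pure tree edge. -/
def PSedge (N : RawNet n) (e : ℕ × ℕ) : Prop :=
  N.PureTree e ∧ ∃ w, (e.1, w) ∈ N.E.erase e ∧ ¬ N.IsRet w

/-- `Σ_{e ∈ E_{PS}} δ_T(e)`. -/
def sumDeltaT_PS (N : RawNet n) : ℕ :=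
  ((N.E.filter (fun e => N.PSedge e)).map (fun e => N.deltaT e)).sum

/-- `Σ_{e ∈ E} δ(e)`: sum of `δ` over all edges. -/
def sumDeltaAll (N : RawNet n) : ℕ :=
  (N.E.map (fun e => N.delta e)).sum

/-- Number of pure inner tree edges: edges incident to no reticulation, no leaf,
and not to the root. -/
def numPureInner (N : RawNet n) : ℕ :=
  (N.E.filter (fun e => e.1 ≠ N.root ∧ e.2 ≠ N.root ∧ N.outDeg e.1 ≠ 0 ∧
    N.outDeg e.2 ≠ 0 ∧ ¬ N.IsRet e.1 ∧ ¬ N.IsRet e.2)).card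

/-- The multiset of tree-child respecting SNPR operations `(e,f)` on `N`
(with multiplicity coming from parallel edges). -/
def OpsTCms (N : RawNet n) : Multiset ((ℕ × ℕ) × (ℕ × ℕ)) :=
  N.E.bind (fun e => ((N.E.erase e).filter (fun f => N.SNPRtcCond e f)).map (fun f => (e, f)))

/-- The result of the SNPR operation `θ = (e,f)` on `N` is isomorphic to `M`. -/
def ResultIsoOp (N : RawNet n) (θ : (ℕ × ℕ) × (ℕ × ℕ)) (M : RawNet n) : Prop :=
  ∃ a w u'', (a, θ.1.1) ∈ N.E ∧ (θ.1.1, w) ∈ N.E.erase θ.1 ∧ u'' ∉ N.V ∧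
    (N.snprResult θ.1.1 θ.1.2 a w θ.2.1 θ.2.2 u'').Iso M

/-- `M ≠ N` is obtained from `N` by at least two distinct (redundant) non-trivial
tree-child respecting SNPR operations. -/
def MultiResult (N M : RawNet n) : Prop :=
  ¬ M.Iso N ∧ ∃ θ θ', θ ∈ N.OpsTCms ∧ θ' ∈ N.OpsTCms ∧
    (θ ≠ θ' ∨ 2 ≤ N.OpsTCms.count θ) ∧ N.ResultIsoOp θ M ∧ N.ResultIsoOp θ' M

/-- The number of non-trivial redundant tree-child respecting SNPR operations on `N`. -/
def numNontrivRedundant (N : RawNet n) : ℕ :=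
  (N.OpsTCms.filter (fun θ => ∃ M, N.MultiResult M ∧ N.ResultIsoOp θ M)).card

/-- The number of redundancy sets of non-trivial tree-child respecting SNPR operations on `N`
is `k` (one redundancy set per isomorphism class of networks reached by at least two
redundant non-trivial operations). -/
def NumRedSetsIs (N : RawNet n) (k : ℕ) : Prop :=
  ∃ L : List (RawNet n), L.length = k ∧ L.Pairwise (fun A B => ¬ A.Iso B) ∧
    (∀ M ∈ L, N.MultiResult M) ∧ (∀ M, N.MultiResult M → ∃ M' ∈ L, M.Iso M')

/-- `M` is the result of an NNI operation on the tree `T`: for an inner tree edge `(u,v)`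
(the axis) with sibling edge `(u,s)`, prune an edge `(v,g2)` outgoing from `v`
(whose sibling edge at `v` is `(v,w')`) and regraft it to `(u,s)`. -/
def IsNNIres (T M : RawNet n) : Prop :=
  ∃ u v s g2 w' u'', (u, v) ∈ T.E ∧ (u, s) ∈ T.E.erase (u, v) ∧ T.inDeg u = 1 ∧
    (v, g2) ∈ T.E ∧ (v, w') ∈ T.E.erase (v, g2) ∧ u'' ∉ T.V ∧
    M = T.snprResult v g2 u w' u s u''

end RawNet

/-- The balanced (complete) rooted binary phylogenetic tree on `2^k` leaves: root `0` with
root edge `(0,1)`, inner vertices `1, …, 2^k − 1` with children `2i` and `2i+1`, and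
leaves `2^k, …, 2^(k+1) − 1`. -/
def balancedTree (k : ℕ) : RawNet (2 ^ k) :=
  { V := Finset.range (2 ^ (k + 1))
    E := (0, 1) ::ₘ ((Finset.Icc 1 (2 ^ k - 1)).val.bind
          (fun i => {(i, 2 * i), (i, 2 * i + 1)}))
    root := 0
    leaf := fun i => 2 ^ k + (i : ℕ) }

/-- The tree-child network consisting of a chain of `n − 1` triangles: the root is `0`; the
`j`-th triangle (for `j = 0, …, n−2`) has top vertex `3j+1`, middle tree vertex `3j+2` and
reticulation `3j+3`; the second child of the middle vertex is the leaf `3(n−1)+1+j`; the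
child of the reticulation of triangle `j` is the top vertex of triangle `j+1`, except for
the last triangle, whose reticulation has the leaf `3(n−1)+n` as its child. -/
def chainNet (n : ℕ) : RawNet n :=
  { V := Finset.range (3 * (n - 1) + 1 + n)
    E := (0, 1) ::ₘ
      (((Multiset.range (n - 1)).bind (fun j =>
          {(3 * j + 1, 3 * j + 2), (3 * j + 1, 3 * j + 3), (3 * j + 2, 3 * j + 3),
           (3 * j + 2, 3 * (n - 1) + 1 + j)}))
        + ((Multiset.range (n - 2)).map (fun j => (3 * j + 3, 3 * (j + 1) + 1)))
        + {(3 * (n - 2) + 3, 3 * (n - 1) + 1 + (n - 1))})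
    root := 0
    leaf := fun i => 3 * (n - 1) + 1 + (i : ℕ) }

/-- Every tree-child network has exactly one automorphism
(directed-graph isomorphism fixing every labelled leaf), namely the identity:
any such automorphism fixes every vertex (hence does not exchange any two distinct
vertices or edges). -/
theorem treeChild_unique_automorphism (n : ℕ) (hn : 2 ≤ n) (N : RawNet n)
    (hN : N.IsPhylo) (htc : N.TreeChild)
    (φ : ℕ → ℕ) (hbij : Set.BijOn φ ↑N.V ↑N.V)
    (hE : N.E.map (fun p => (φ p.1, φ p.2)) = N.E)
    (hleaf : ∀ i, φ (N.leaf i) = N.leaf i) :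
    ∀ v ∈ N.V, φ v = v := by
  have hmemE : ∀ a b, (a, b) ∈ N.E → (φ a, φ b) ∈ N.E := by
    intro a b hab
    have h := Multiset.mem_map_of_mem (fun p : ℕ × ℕ => (φ p.1, φ p.2)) hab
    rwa [hE] at h
  have key : ∀ k v, v ∈ N.V →
      (N.V.filter (fun u => Relation.TransGen N.Adj v u)).card = k → φ v = v := by
    intro k
    induction k using Nat.strong_induction_on with
    | _ k ih =>
      intro v hv hcard
      -- either v is a leaf (then done), or v has out-degree ≥ 1
      have hout : (∃ i, v = N.leaf i) ∨ 1 ≤ N.outDeg v := by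
        rcases hN.classify v hv with hr | hl | hdeg | hdeg
        · right; rw [hr, hN.root_out]
        · left; exact hl
        · right; omega
        · right; omega
      rcases hout with ⟨i, hvi⟩ | hout
      · rw [hvi]; exact hleaf i
      obtain ⟨w, hvw, hwret⟩ := htc v hv hout
      have hwV : w ∈ N.V := (hN.edge_mem _ hvw).2
      have hadj : N.Adj v w := hvw
      -- the descendant set of w is strictly smaller than that of v
      have hsub : (N.V.filter (fun u => Relation.TransGen N.Adj w u)) ⊂
          (N.V.filter (fun u => Relation.TransGen N.Adj v u)) := by
        rw [Finset.ssubset_def]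
        constructor
        · intro u hu
          rw [Finset.mem_filter] at hu ⊢
          exact ⟨hu.1, Relation.TransGen.head hadj hu.2⟩
        · intro hle
          have hw1 : w ∈ N.V.filter (fun u => Relation.TransGen N.Adj v u) :=
            Finset.mem_filter.2 ⟨hwV, Relation.TransGen.single hadj⟩
          have := Finset.mem_filter.1 (hle hw1)
          exact hN.acyclic w this.2
      have hlt : (N.V.filter (fun u => Relation.TransGen N.Adj w u)).card < k :=
        hcard ▸ Finset.card_lt_card hsub
      have hφw : φ w = w := ih _ hlt w hwV rfl
      by_contra hne
      have h2 : (φ v, w) ∈ N.E := by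
        have := hmemE v w hvw
        rwa [hφw] at this
      -- then w has two distinct parents v and φ v, so inDeg w ≥ 2
      have hfil1 : (v, w) ∈ N.E.filter (fun e => e.2 = w) :=
        Multiset.mem_filter.2 ⟨hvw, rfl⟩
      have hfil2 : (φ v, w) ∈ N.E.filter (fun e => e.2 = w) :=
        Multiset.mem_filter.2 ⟨h2, rfl⟩
      have hnepair : (φ v, w) ≠ (v, w) := by
        intro hcontra
        exact hne (congrArg Prod.fst hcontra)
      have hmem_erase : (φ v, w) ∈ (N.E.filter (fun e => e.2 = w)).erase (v, w) :=
        (Multiset.mem_erase_of_ne hnepair).2 hfil2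
      have hcard_erase : 1 ≤ ((N.E.filter (fun e => e.2 = w)).erase (v, w)).card :=
        Multiset.card_pos_iff_exists_mem.2 ⟨_, hmem_erase⟩
      have hcard_tot : ((N.E.filter (fun e => e.2 = w)).erase (v, w)).card =
          (N.E.filter (fun e => e.2 = w)).card - 1 :=
        Multiset.card_erase_of_mem hfil1
      have hin2 : 2 ≤ N.inDeg w := by
        have h1 : 1 ≤ (N.E.filter (fun e => e.2 = w)).card :=
          Multiset.card_pos_iff_exists_mem.2 ⟨_, hfil1⟩
        unfold RawNet.inDeg
        omega
      -- but w is a tree vertex, contradiction via classification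
      have hin1 : 1 ≤ N.inDeg w := by omega
      rcases hN.classify w hwV with hwr | ⟨j, hwj⟩ | hwdeg | hwdeg
      · rw [hwr, hN.root_in] at hin1; omega
      · rw [hwj, hN.leaf_in j] at hin2; omega
      · rw [hwdeg.1] at hin2; omega
      · exact hwret hwdeg.1
  intro v hv
  exact key _ v hv rfl
end
end

section
/- Let N be a tree-child network on n ≥ 2 leaves and let (e,f) be an SNPR operation on N with e = (u,v) and f = (x,y) not a descendant of e. Then the network (e,f)(N) is tree-child if and only if one of the following holds: (i) e is a reticulation edge and f is not a reticulation edge; (ii) e is a pure tree edge that is not critical; (iii) e is a critical edge and f is incident to u; (iv) e is the critical edge of an r₃ structure with underlying path w, u, x, y such that u and y are the children of x, and f = (x,y); (v) e is the critical edge of a triangle and f is the long side of that triangle. -/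
/-!
Formalization of rooted binary phylogenetic networks (directed multigraphs with
labelled leaves), tree-child networks, and the SNPR / SNPR+ / SNPR− rearrangement
operations, following Klawitter, "The SNPR neighbourhood of tree-child networks".
-/

noncomputable section

attribute [local instance] Classical.propDecidable

/-! ### Auxiliary lemmas for Statement 1 -/

section Aux

variable {n : ℕ} {N : RawNet n}

lemma inDeg_eq_countP (N : RawNet n) (t : ℕ) :
    N.inDeg t = N.E.countP (fun e => e.2 = t) :=
  (Multiset.countP_eq_card_filter _ _).symm

lemma outDeg_eq_countP (N : RawNet n) (t : ℕ) :
    N.outDeg t = N.E.countP (fun e => e.1 = t) :=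
  (Multiset.countP_eq_card_filter _ _).symm

lemma countP_eq_of_add_eq {α : Type*} {s t A B : Multiset α}
    (h : s + A = t + B) (p : α → Prop) [DecidablePred p] :
    s.countP p + A.countP p = t.countP p + B.countP p := by
  rw [← Multiset.countP_add, h, Multiset.countP_add]

lemma count_eq_of_add_eq {α : Type*} [DecidableEq α] {s t A B : Multiset α}
    (h : s + A = t + B) (g : α) :
    s.count g + A.count g = t.count g + B.count g := by
  rw [← Multiset.count_add, h, Multiset.count_add]

lemma no_self_loop (hN : N.IsPhylo) (t : ℕ) : (t, t) ∉ N.E :=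
  fun h => hN.acyclic t (Relation.TransGen.single h)

lemma filter_out_eq_pair (N : RawNet n) {u v w : ℕ}
    (he : (u, v) ∈ N.E) (hw : (u, w) ∈ N.E.erase (u, v))
    (hdeg : N.outDeg u = 2) :
    N.E.filter (fun e => e.1 = u) = {(u, v), (u, w)} := by
  refine (Multiset.eq_of_le_of_card_le ?_ ?_).symm
  · rw [Multiset.le_iff_count]
    intro g
    have hcv : 1 ≤ N.E.count (u, v) := Multiset.one_le_count_iff_mem.2 he
    have hcw : 1 ≤ N.E.count (u, w) :=
      Multiset.one_le_count_iff_mem.2 (Multiset.mem_of_mem_erase hw)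
    rw [Multiset.count_filter]
    by_cases h1 : g = (u, v)
    · subst h1
      by_cases h2 : v = w
      · subst h2
        have h3 : 2 ≤ N.E.count (u, v) := by
          have h4 := Multiset.count_pos.2 hw
          rw [Multiset.count_erase_self] at h4
          omega
        simpa using h3
      · have h5 : ((u,v) : ℕ × ℕ) ≠ (u, w) := by simp [h2]
        simpa [Multiset.count_cons, Multiset.count_singleton, h5] using hcv
    · by_cases h2 : g = (u, w)
      · subst h2
        simpa [Multiset.count_cons, Multiset.count_singleton, Ne.symm h1, h1] using hcw
      · have h6 : ((u,v) : ℕ × ℕ) ≠ g := fun hh => h1 hh.symm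
        have h7 : ((u,w) : ℕ × ℕ) ≠ g := fun hh => h2 hh.symm
        simp only [Multiset.insert_eq_cons, Multiset.count_cons, Multiset.count_singleton,
          if_neg h1, if_neg h2]
        split <;> omega
  · have h8 : (N.E.filter (fun e => e.1 = u)).card = 2 := hdeg
    simp [h8]

lemma filter_in_eq_single (N : RawNet n) {u a : ℕ}
    (ha : (a, u) ∈ N.E) (hdeg : N.inDeg u = 1) :
    N.E.filter (fun e => e.2 = u) = {(a, u)} := by
  refine (Multiset.eq_of_le_of_card_le ?_ ?_).symm
  · rw [Multiset.le_iff_count]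
    intro g
    have hca : 1 ≤ N.E.count (a, u) := Multiset.one_le_count_iff_mem.2 ha
    rw [Multiset.count_filter]
    by_cases h1 : g = (a, u)
    · subst h1
      simpa using hca
    · simp only [Multiset.count_singleton, if_neg h1]
      split <;> omega
  · have h8 : (N.E.filter (fun e => e.2 = u)).card = 1 := hdeg
    simp [h8]

lemma filter_out_eq_single (N : RawNet n) {u v : ℕ}
    (he : (u, v) ∈ N.E) (hdeg : N.outDeg u = 1) :
    N.E.filter (fun e => e.1 = u) = {(u, v)} := by
  refine (Multiset.eq_of_le_of_card_le ?_ ?_).symm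
  · rw [Multiset.le_iff_count]
    intro g
    have hca : 1 ≤ N.E.count (u, v) := Multiset.one_le_count_iff_mem.2 he
    rw [Multiset.count_filter]
    by_cases h1 : g = (u, v)
    · subst h1
      simpa using hca
    · simp only [Multiset.count_singleton, if_neg h1]
      split <;> omega
  · have h8 : (N.E.filter (fun e => e.1 = u)).card = 1 := hdeg
    simp [h8]

lemma mem_out_of_filter_pair {u v w : ℕ}
    (hfil : N.E.filter (fun e => e.1 = u) = {(u, v), (u, w)}) {c : ℕ}
    (hc : (u, c) ∈ N.E) : c = v ∨ c = w := by
  have : (u, c) ∈ N.E.filter (fun e => e.1 = u) :=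
    Multiset.mem_filter.2 ⟨hc, rfl⟩
  rw [hfil] at this
  rcases Multiset.mem_cons.1 this with h | h
  · exact Or.inl (congrArg Prod.snd h)
  · exact Or.inr (congrArg Prod.snd (Multiset.mem_singleton.1 h))

lemma mem_in_of_filter_single {u a : ℕ}
    (hfil : N.E.filter (fun e => e.2 = u) = {(a, u)}) {c : ℕ}
    (hc : (c, u) ∈ N.E) : c = a := by
  have : (c, u) ∈ N.E.filter (fun e => e.2 = u) :=
    Multiset.mem_filter.2 ⟨hc, rfl⟩
  rw [hfil] at this
  exact congrArg Prod.fst (Multiset.mem_singleton.1 this)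

lemma count_of_filter_in_single {u a : ℕ}
    (hfil : N.E.filter (fun e => e.2 = u) = {(a, u)}) :
    N.E.count (a, u) = 1 := by
  have h := congrArg (Multiset.count (a, u)) hfil
  rwa [Multiset.count_filter, if_pos rfl, Multiset.count_singleton, if_pos rfl] at h

lemma count_of_filter_out_pair {u v w : ℕ} (hvw : v ≠ w)
    (hfil : N.E.filter (fun e => e.1 = u) = {(u, v), (u, w)}) :
    N.E.count (u, v) = 1 ∧ N.E.count (u, w) = 1 := by
  constructor
  · have h := congrArg (Multiset.count (u, v)) hfil
    rwa [Multiset.count_filter, if_pos rfl, Multiset.insert_eq_cons, Multiset.count_cons,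
      if_pos rfl, Multiset.count_singleton,
      if_neg (by simp [hvw])] at h
  · have h := congrArg (Multiset.count (u, w)) hfil
    rwa [Multiset.count_filter, if_pos rfl, Multiset.insert_eq_cons, Multiset.count_cons,
      if_neg (by simp [Ne.symm hvw]), Multiset.count_singleton, if_pos rfl] at h

lemma inDeg_pos_of_mem {t c : ℕ} (hc : (c, t) ∈ N.E) : 1 ≤ N.inDeg t := by
  have : (c, t) ∈ N.E.filter (fun e => e.2 = t) := Multiset.mem_filter.2 ⟨hc, rfl⟩
  exact Multiset.card_pos_iff_exists_mem.2 ⟨_, this⟩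

lemma outDeg_pos_of_mem {t c : ℕ} (hc : (t, c) ∈ N.E) : 1 ≤ N.outDeg t := by
  have : (t, c) ∈ N.E.filter (fun e => e.1 = t) := Multiset.mem_filter.2 ⟨hc, rfl⟩
  exact Multiset.card_pos_iff_exists_mem.2 ⟨_, this⟩

lemma exists_parent (hN : N.IsPhylo) {t : ℕ} (ht : t ∈ N.V) (hne : t ≠ N.root) :
    ∃ s, (s, t) ∈ N.E := by
  have hpos : 1 ≤ N.inDeg t := by
    rcases hN.classify t ht with h | ⟨i, hi⟩ | ⟨h1, h2⟩ | ⟨h1, h2⟩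
    · exact absurd h hne
    · rw [hi, hN.leaf_in i]
    · omega
    · omega
  obtain ⟨g, hg⟩ := Multiset.card_pos_iff_exists_mem.1 hpos
  rcases Multiset.mem_filter.1 hg with ⟨hgE, hgt⟩
  exact ⟨g.1, by rwa [show (g.1, t) = g from Prod.ext rfl hgt.symm]⟩

/-- Every vertex is the root or reachable from the root. -/
lemma reach_from_root (hN : N.IsPhylo) :
    ∀ t ∈ N.V, t = N.root ∨ Relation.TransGen N.Adj N.root t := by
  have key : ∀ k : ℕ, ∀ t ∈ N.V,
      (N.V.filter (fun s => Relation.TransGen N.Adj s t)).card ≤ k →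
      t = N.root ∨ Relation.TransGen N.Adj N.root t := by
    intro k
    induction k with
    | zero =>
      intro t ht hcard
      by_cases hne : t = N.root
      · exact Or.inl hne
      · obtain ⟨s, hs⟩ := exists_parent hN ht hne
        have hsA : s ∈ N.V.filter (fun s => Relation.TransGen N.Adj s t) :=
          Finset.mem_filter.2 ⟨(hN.edge_mem _ hs).1, Relation.TransGen.single hs⟩
        have := Finset.card_pos.2 ⟨s, hsA⟩
        omega
    | succ k ih =>
      intro t ht hcard
      by_cases hne : t = N.root
      · exact Or.inl hne
      · obtain ⟨s, hs⟩ := exists_parent hN ht hne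
        have hsV : s ∈ N.V := (hN.edge_mem _ hs).1
        have hsub : N.V.filter (fun s' => Relation.TransGen N.Adj s' s) ⊂
            N.V.filter (fun s' => Relation.TransGen N.Adj s' t) := by
          constructor
          · intro s' hs'
            rcases Finset.mem_filter.1 hs' with ⟨h1, h2⟩
            exact Finset.mem_filter.2 ⟨h1, h2.tail hs⟩
          · intro hcontra
            have hsA : s ∈ N.V.filter (fun s' => Relation.TransGen N.Adj s' t) :=
              Finset.mem_filter.2 ⟨hsV, Relation.TransGen.single hs⟩
            have := Finset.mem_filter.1 (hcontra hsA)
            exact hN.acyclic s this.2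
        have hlt := Finset.card_lt_card hsub
        have hcard' : (N.V.filter (fun s' => Relation.TransGen N.Adj s' s)).card ≤ k := by
          omega
        rcases ih s hsV hcard' with h | h
        · exact Or.inr (h ▸ Relation.TransGen.single hs)
        · exact Or.inr (h.tail hs)
  intro t ht
  exact key _ t ht le_rfl

lemma cons_add_three {α : Type*} [DecidableEq α] (Z : Multiset α) (c q r s : α) :
    (c ::ₘ Z) + {q, r, s} = c ::ₘ q ::ₘ r ::ₘ s ::ₘ Z := by
  rw [Multiset.ext]
  intro g
  simp only [Multiset.count_add, Multiset.count_cons, Multiset.count_singleton,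
    Multiset.insert_eq_cons]
  split_ifs <;> omega

lemma transGen_cases_head {α : Type*} {r : α → α → Prop} {a c : α}
    (h : Relation.TransGen r a c) : r a c ∨ ∃ b, r a b ∧ Relation.TransGen r b c := by
  rcases Relation.TransGen.head'_iff.1 h with ⟨b, hab, hbc⟩
  rcases Relation.reflTransGen_iff_eq_or_transGen.1 hbc with rfl | h2
  · exact Or.inl hab
  · exact Or.inr ⟨b, hab, h2⟩

lemma add_sing_three {α : Type*} [DecidableEq α] (Z : Multiset α) (p q r s : α) :
    (Z + {p}) + {q, r, s} = p ::ₘ q ::ₘ r ::ₘ s ::ₘ Z := by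
  rw [Multiset.ext]
  intro g
  simp only [Multiset.count_add, Multiset.count_cons, Multiset.count_singleton,
    Multiset.insert_eq_cons]
  split_ifs <;> omega

lemma add_three {α : Type*} [DecidableEq α] (Z : Multiset α) (q r s : α) :
    Z + {q, r, s} = q ::ₘ r ::ₘ s ::ₘ Z := by
  rw [Multiset.ext]
  intro g
  simp only [Multiset.count_add, Multiset.count_cons, Multiset.count_singleton,
    Multiset.insert_eq_cons]
  split_ifs <;> omega

end Aux

/-- Characterisation of the tree-child respecting SNPR operations `(e,f)`
on a tree-child network `N`, with `e = (u,v)` (parent edge `(a,u)`, sibling edge `(u,w)`)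
and `f = (x,y)` an edge other than `e` that is not a descendant of `e`:
the resulting network is tree-child iff
(i) `e` is a reticulation edge and `f` is not a reticulation edge; or
(ii) `e` is a pure tree edge that is not critical; or
(iii) `e` is critical and `f` is incident to `u`; or
(iv) `e` is the critical edge of an `r₃` structure with underlying path `w₂, u, x, y`
     such that `u` and `y` are the children of `x` and `f = (x,y)`; or
(v) `e` is the critical edge of a triangle and `f` is its long side. -/
theorem snpr_treeChild_respecting_iff (n : ℕ) (hn : 2 ≤ n) (N : RawNet n)
    (hN : N.IsPhylo) (htc : N.TreeChild) (u v x y a w u'' : ℕ)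
    (he : (u, v) ∈ N.E) (hu : N.inDeg u = 1)
    (hf : (x, y) ∈ N.E.erase (u, v)) (hdesc : ¬ N.EdgeDesc (u, v) (x, y))
    (ha : (a, u) ∈ N.E) (hw : (u, w) ∈ N.E.erase (u, v)) (hu'' : u'' ∉ N.V) :
    (N.snprResult u v a w x y u'').TreeChild ↔
      (N.IsRet v ∧ ¬ N.IsRet y) ∨
      (N.PureTree (u, v) ∧ ¬ N.Critical (u, v)) ∨
      (N.Critical (u, v) ∧ (x = u ∨ y = u)) ∨
      (¬ N.IsRet v ∧ (x, u) ∈ N.E ∧ N.IsRet y ∧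
        ∃ w₂, (u, w₂) ∈ N.E.erase (u, v) ∧ N.IsRet w₂) ∨
      (¬ N.IsRet v ∧ (x, u) ∈ N.E ∧ (u, y) ∈ N.E ∧ N.IsRet y) := by
  classical
  -- ### basic vertex facts
  have huV : u ∈ N.V := (hN.edge_mem _ he).1
  have hvV : v ∈ N.V := (hN.edge_mem _ he).2
  have haV : a ∈ N.V := (hN.edge_mem _ ha).1
  have hfE : (x, y) ∈ N.E := Multiset.mem_of_mem_erase hf
  have hwE : (u, w) ∈ N.E := Multiset.mem_of_mem_erase hw
  have hxV : x ∈ N.V := (hN.edge_mem _ hfE).1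
  have hyV : y ∈ N.V := (hN.edge_mem _ hfE).2
  have hwV : w ∈ N.V := (hN.edge_mem _ hwE).2
  have hneuv : u ≠ v := by intro h; exact no_self_loop hN u (by rw [h] at he ⊢; exact h ▸ he)
  have hneuw : u ≠ w := by intro h; apply no_self_loop hN w; rw [h] at hwE; exact hwE
  have hneau : a ≠ u := by intro h; apply no_self_loop hN u; rw [h] at ha; exact ha
  have hu''u : u'' ≠ u := fun h => hu'' (h ▸ huV)
  have hu''v : u'' ≠ v := fun h => hu'' (h ▸ hvV)
  have hu''w : u'' ≠ w := fun h => hu'' (h ▸ hwV)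
  have hu''a : u'' ≠ a := fun h => hu'' (h ▸ haV)
  have hu''x : u'' ≠ x := fun h => hu'' (h ▸ hxV)
  have hu''y : u'' ≠ y := fun h => hu'' (h ▸ hyV)
  -- ### degrees of u
  have houtpos : 1 ≤ N.outDeg u := outDeg_pos_of_mem he
  have hout2 : N.outDeg u = 2 := by
    rcases hN.classify u huV with h | ⟨i, hi⟩ | ⟨h1, h2⟩ | ⟨h1, h2⟩
    · have h2 := hN.root_in; rw [← h] at h2; omega
    · have h2 := hN.leaf_out i; rw [← hi] at h2; omega
    · exact h2
    · omega
  have hfilU : N.E.filter (fun e => e.1 = u) = {(u, v), (u, w)} :=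
    filter_out_eq_pair N he hw hout2
  have hfilInU : N.E.filter (fun e => e.2 = u) = {(a, u)} := filter_in_eq_single N ha hu
  have hmemU : ∀ c, (u, c) ∈ N.E → c = v ∨ c = w := fun c hc =>
    mem_out_of_filter_pair hfilU hc
  have hparU : ∀ c, (c, u) ∈ N.E → c = a := fun c hc => mem_in_of_filter_single hfilInU hc
  have hvw : v ≠ w := by
    intro h
    obtain ⟨c, hc, hcr⟩ := htc u huV houtpos
    have h4 := Multiset.count_pos.2 (h ▸ hw)
    rw [Multiset.count_erase_self] at h4
    have hile : 2 ≤ N.inDeg w := by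
      have h5 : N.E.count (u, w) = (N.E.filter (fun e => e.2 = w)).count (u, w) := by
        rw [Multiset.count_filter, if_pos rfl]
      have h6 := Multiset.count_le_card (u, w) (N.E.filter (fun e => e.2 = w))
      have h7 : N.inDeg w = (N.E.filter (fun e => e.2 = w)).card := rfl
      omega
    have hretw : N.IsRet w := by
      show N.inDeg w = 2
      rcases hN.classify w hwV with h1 | ⟨i, hi⟩ | ⟨h1, h2⟩ | ⟨h1, h2⟩
      · have h2 := hN.root_in; rw [← h1] at h2; omega
      · have h2 := hN.leaf_in i; rw [← hi] at h2; omega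
      · omega
      · exact h1
    rcases hmemU c hc with h1 | h1
    · rw [h1, h] at hcr; exact hcr hretw
    · rw [h1] at hcr; exact hcr hretw
  have hcuvw := count_of_filter_out_pair hvw hfilU
  have hcuv : N.E.count (u, v) = 1 := hcuvw.1
  have hcuw : N.E.count (u, w) = 1 := hcuvw.2
  have hcau : N.E.count (a, u) = 1 := count_of_filter_in_single hfilInU
  have hxyne_uv : (x, y) ≠ (u, v) := by
    intro h
    rw [h] at hf
    have h4 := Multiset.count_pos.2 hf
    rw [Multiset.count_erase_self] at h4; omega
  have hnotRetU : ¬ N.IsRet u := by intro hh; have h2 : N.inDeg u = 2 := hh; omega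
  have hFiff : (x = u ∨ y = u) ↔ ((x, y) = (a, u) ∨ (x, y) = (u, w)) := by
    constructor
    · rintro (h | h)
      · have hfE' : (u, y) ∈ N.E := by rw [← h]; exact hfE
        rcases hmemU y hfE' with h1 | h1
        · exact absurd (Prod.ext h h1) hxyne_uv
        · exact Or.inr (Prod.ext h h1)
      · have hfE' : (x, u) ∈ N.E := by rw [← h]; exact hfE
        exact Or.inl (Prod.ext (hparU x hfE') h)
    · rintro (h | h)
      · exact Or.inr (congrArg Prod.snd h)
      · exact Or.inl (congrArg Prod.fst h)
  -- ### classification of the parent a of u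
  have haCases : (a = N.root ∧ N.E.filter (fun e => e.1 = a) = {(a, u)}) ∨
      (N.IsRet a ∧ N.E.filter (fun e => e.1 = a) = {(a, u)}) ∨
      (∃ b, b ≠ u ∧ N.inDeg a = 1 ∧ (a, b) ∈ N.E.erase (a, u) ∧
        N.E.filter (fun e => e.1 = a) = {(a, u), (a, b)}) := by
    rcases hN.classify a haV with h | ⟨i, hi⟩ | ⟨h1, h2⟩ | ⟨h1, h2⟩
    · refine Or.inl ⟨h, filter_out_eq_single N ha ?_⟩
      rw [h]; exact hN.root_out
    · have h2 := hN.leaf_out i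
      have h3 := outDeg_pos_of_mem ha
      rw [← hi] at h2; omega
    · -- inner tree vertex
      have hmem : (a, u) ∈ N.E.filter (fun e => e.1 = a) := Multiset.mem_filter.2 ⟨ha, rfl⟩
      obtain ⟨t, ht⟩ := Multiset.exists_cons_of_mem hmem
      have hcard : Multiset.card t = 1 := by
        have h3 := congrArg Multiset.card ht
        rw [Multiset.card_cons] at h3
        have h4 : (N.E.filter (fun e => e.1 = a)).card = 2 := h2
        omega
      obtain ⟨g, hg⟩ := Multiset.card_eq_one.1 hcard
      have hgmem : g ∈ N.E.filter (fun e => e.1 = a) := by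
        rw [ht, hg]; exact Multiset.mem_cons_of_mem (Multiset.mem_singleton_self g)
      have hga : g.1 = a := (Multiset.mem_filter.1 hgmem).2
      have hgE : g ∈ N.E := (Multiset.mem_filter.1 hgmem).1
      have hgp : (a, g.2) = g := Prod.ext hga.symm rfl
      have hgne : g ≠ (a, u) := by
        intro hcon
        have hcnt := congrArg (Multiset.count (a, u)) ht
        rw [Multiset.count_filter, if_pos rfl, hg, hcon, Multiset.count_cons_self,
          Multiset.count_singleton, if_pos rfl] at hcnt
        omega
      refine Or.inr (Or.inr ⟨g.2, ?_, h1, ?_, ?_⟩)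
      · intro hcon; apply hgne; rw [← hgp, hcon]
      · exact (Multiset.mem_erase_of_ne (by rw [hgp]; exact hgne)).2 (hgp ▸ hgE)
      · rw [ht, hg, hgp]; rfl
    · exact Or.inr (Or.inl ⟨h1, filter_out_eq_single N ha h2⟩)
  have hOnly : N.E.filter (fun e => e.1 = a) = {(a, u)} → ∀ b', (a, b') ∉ N.E.erase (a, u) := by
    intro hfil b' hb'
    have hbE : (a, b') ∈ N.E := Multiset.mem_of_mem_erase hb'
    have h1 : (a, b') ∈ ({(a, u)} : Multiset (ℕ × ℕ)) := by
      rw [← hfil]; exact Multiset.mem_filter.2 ⟨hbE, rfl⟩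
    have h2 : b' = u := congrArg Prod.snd (Multiset.mem_singleton.1 h1)
    rw [h2] at hb'
    have h4 := Multiset.count_pos.2 hb'
    rw [Multiset.count_erase_self] at h4; omega
  have hUniq : ∀ b, N.E.filter (fun e => e.1 = a) = {(a, u), (a, b)} →
      ∀ b', (a, b') ∈ N.E.erase (a, u) → b' = b := by
    intro b hfil b' hb'
    have hbE : (a, b') ∈ N.E := Multiset.mem_of_mem_erase hb'
    have h1 : (a, b') ∈ ({(a, u), (a, b)} : Multiset (ℕ × ℕ)) := by
      rw [← hfil]; exact Multiset.mem_filter.2 ⟨hbE, rfl⟩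
    rcases Multiset.mem_cons.1 h1 with h2 | h2
    · exfalso
      have h3 : b' = u := congrArg Prod.snd h2
      rw [h3] at hb'
      have h4 := Multiset.count_pos.2 hb'
      rw [Multiset.count_erase_self] at h4; omega
    · exact congrArg Prod.snd (Multiset.mem_singleton.1 h2)
  -- ### characterisation of critical
  have hcrit : N.Critical (u, v) ↔ (¬ N.IsRet v ∧ N.IsRet w ∧
      (N.IsRet a ∨ ∃ b, (a, b) ∈ N.E.erase (a, u) ∧ N.IsRet b)) := by
    constructor
    · rintro ⟨h1, ⟨w', hw', hrw'⟩, h3⟩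
      refine ⟨h1, ?_, ?_⟩
      · rcases hmemU w' hw' with h | h
        · rw [h] at hrw'; exact absurd hrw' h1
        · rwa [h] at hrw'
      · rcases h3 with ⟨x', hx', hrx'⟩ | ⟨x', y', hx', hy', hry'⟩
        · rw [hparU x' hx'] at hrx'; exact Or.inl hrx'
        · have h5 := hparU x' hx'
          rw [h5] at hy'
          exact Or.inr ⟨y', hy', hry'⟩
    · rintro ⟨h1, h2, h3⟩
      refine ⟨h1, ⟨w, hwE, h2⟩, ?_⟩
      rcases h3 with h | ⟨b, hb, hrb⟩
      · exact Or.inl ⟨a, ha, h⟩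
      · exact Or.inr ⟨a, b, ha, hb, hrb⟩
  -- ### the second parent of w when w is a reticulation
  have hsecondParent : N.IsRet w → ∃ p, p ≠ u ∧ (p, w) ∈ N.E := by
    intro hrw
    have hmem : (u, w) ∈ N.E.filter (fun e => e.2 = w) := Multiset.mem_filter.2 ⟨hwE, rfl⟩
    obtain ⟨t, ht⟩ := Multiset.exists_cons_of_mem hmem
    have hcard : Multiset.card t = 1 := by
      have h3 := congrArg Multiset.card ht
      rw [Multiset.card_cons] at h3
      have h4 : (N.E.filter (fun e => e.2 = w)).card = 2 := hrw
      omega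
    obtain ⟨g, hg⟩ := Multiset.card_eq_one.1 hcard
    have hgmem : g ∈ N.E.filter (fun e => e.2 = w) := by
      rw [ht, hg]; exact Multiset.mem_cons_of_mem (Multiset.mem_singleton_self g)
    have hgw : g.2 = w := (Multiset.mem_filter.1 hgmem).2
    have hgE : g ∈ N.E := (Multiset.mem_filter.1 hgmem).1
    have hgp : (g.1, w) = g := Prod.ext rfl hgw.symm
    have hgne : g ≠ (u, w) := by
      intro hcon
      have hcnt := congrArg (Multiset.count (u, w)) ht
      rw [Multiset.count_filter, if_pos rfl, hg, hcon, Multiset.count_cons_self,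
        Multiset.count_singleton, if_pos rfl] at hcnt
      omega
    refine ⟨g.1, ?_, hgp ▸ hgE⟩
    intro hcon; apply hgne; rw [← hgp, hcon]
  have hreach := reach_from_root hN
  -- ### if a is the root and w a reticulation, then f is incident to u
  have hglobal : a = N.root → N.IsRet w → (x = u ∨ y = u) := by
    intro hroot hrw
    have hrout : N.outDeg a = 1 := by rw [hroot]; exact hN.root_out
    have hrootfil : N.E.filter (fun e => e.1 = a) = {(a, u)} := filter_out_eq_single N ha hrout
    have honlyA : ∀ c, (a, c) ∈ N.E → c = u := by
      intro c hc
      have h1 : (a, c) ∈ ({(a, u)} : Multiset (ℕ × ℕ)) := by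
        rw [← hrootfil]; exact Multiset.mem_filter.2 ⟨hc, rfl⟩
      exact congrArg Prod.snd (Multiset.mem_singleton.1 h1)
    obtain ⟨p, hpu, hpw⟩ := hsecondParent hrw
    have hpV : p ∈ N.V := (hN.edge_mem _ hpw).1
    have htrvw : Relation.TransGen N.Adj v w := by
      rcases hreach p hpV with h | h
      · rw [← hroot] at h
        rw [h] at hpw
        exact absurd (honlyA w hpw) (Ne.symm hneuw)
      · rw [← hroot] at h
        rcases transGen_cases_head h with h1 | ⟨c, hc1, hc2⟩
        · exact absurd (honlyA p h1) hpu
        · rw [honlyA c hc1] at hc2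
          rcases transGen_cases_head hc2 with h1 | ⟨c', hc1', hc2'⟩
          · rcases hmemU p h1 with h2 | h2
            · rw [h2] at hpw; exact Relation.TransGen.single hpw
            · rw [h2] at hpw; exact absurd hpw (no_self_loop hN w)
          · rcases hmemU c' hc1' with h2 | h2
            · rw [h2] at hc2'; exact hc2'.tail hpw
            · rw [h2] at hc2'; exact absurd (hc2'.tail hpw) (hN.acyclic w)
    rcases hreach x hxV with h | h
    · rw [← hroot] at h
      rw [h] at hfE
      exact Or.inr (honlyA y hfE)
    · rw [← hroot] at h
      rcases transGen_cases_head h with h1 | ⟨c, hc1, hc2⟩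
      · exact Or.inl (honlyA x h1)
      · rw [honlyA c hc1] at hc2
        rcases transGen_cases_head hc2 with h1 | ⟨c', hc1', hc2'⟩
        · rcases hmemU x h1 with h2 | h2
          · exact absurd (Or.inl h2) hdesc
          · exact absurd (Or.inr (h2 ▸ htrvw)) hdesc
        · rcases hmemU c' hc1' with h2 | h2
          · rw [h2] at hc2'; exact absurd (Or.inr hc2') hdesc
          · rw [h2] at hc2'; exact absurd (Or.inr (htrvw.trans hc2')) hdesc
  -- ### in-degree zero facts for the fresh vertex
  have hinNu'' : N.inDeg u'' = 0 := by
    have h1 : N.E.filter (fun e => e.2 = u'') = 0 := by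
      rw [Multiset.eq_zero_iff_forall_notMem]
      intro g hg
      rcases Multiset.mem_filter.1 hg with ⟨hgE, hg2⟩
      exact hu'' (hg2 ▸ (hN.edge_mem g hgE).2)
    show (N.E.filter (fun e => e.2 = u'')).card = 0
    rw [h1]; rfl
  have houtNu'' : N.outDeg u'' = 0 := by
    have h1 : N.E.filter (fun e => e.1 = u'') = 0 := by
      rw [Multiset.eq_zero_iff_forall_notMem]
      intro g hg
      rcases Multiset.mem_filter.1 hg with ⟨hgE, hg2⟩
      exact hu'' (hg2 ▸ (hN.edge_mem g hgE).1)
    show (N.E.filter (fun e => e.1 = u'')).card = 0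
    rw [h1]; rfl
  have hnotau : (a, u) ∉ N.E.erase (a, u) := by
    intro hh
    have h4 := Multiset.count_pos.2 hh
    rw [Multiset.count_erase_self] at h4; omega
  -- ### decomposition of the edge multiset
  have hX3 : (u, w) ∈ (N.E.erase (u, v)).erase (a, u) := by
    refine (Multiset.mem_erase_of_ne ?_).2 hw
    intro hcon; exact hneau (congrArg Prod.fst hcon).symm
  have hX2 : (a, u) ∈ N.E.erase (u, v) := by
    refine (Multiset.mem_erase_of_ne ?_).2 ha
    intro hcon; exact hneau (congrArg Prod.fst hcon)
  by_cases hF : (x, y) = (a, u) ∨ (x, y) = (u, w)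
  · -- `f` is incident to `u`: the operation gives back an isomorphic network
    obtain ⟨X, hX⟩ : ∃ X : Multiset (ℕ × ℕ),
        X = ((N.E.erase (u, v)).erase (a, u)).erase (u, w) := ⟨_, rfl⟩
    have hNE : N.E = (u, v) ::ₘ (a, u) ::ₘ (u, w) ::ₘ X := by
      rw [hX, Multiset.cons_erase hX3, Multiset.cons_erase hX2, Multiset.cons_erase he]
    have hME : (N.snprResult u v a w x y u'').E = (a, u'') ::ₘ (u'', w) ::ₘ (u'', v) ::ₘ X := by
      simp only [RawNet.snprResult]
      rw [if_pos hF, ← hX]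
      have h1 : X + {(a, w)} = (a, w) ::ₘ X := by
        rw [add_comm, Multiset.singleton_add]
      rw [h1, Multiset.erase_cons_head]
      exact add_three _ _ _ _
    have hinRel : ∀ t : ℕ, (N.snprResult u v a w x y u'').inDeg t + (if u = t then 1 else 0)
        = N.inDeg t + (if u'' = t then 1 else 0) := by
      intro t
      rw [inDeg_eq_countP, inDeg_eq_countP, hME, hNE]
      simp only [Multiset.countP_cons]
      split_ifs <;> omega
    have houtRel : ∀ t : ℕ, (N.snprResult u v a w x y u'').outDeg t + (if u = t then 2 else 0)
        = N.outDeg t + (if u'' = t then 2 else 0) := by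
      intro t
      rw [outDeg_eq_countP, outDeg_eq_countP, hME, hNE]
      simp only [Multiset.countP_cons]
      split_ifs <;> omega
    have hRetIff : ∀ t, t ≠ u → t ≠ u'' →
        ((N.snprResult u v a w x y u'').IsRet t ↔ N.IsRet t) := by
      intro t h1 h2
      have h3 := hinRel t
      rw [if_neg (fun hh => h1 hh.symm), if_neg (fun hh => h2 hh.symm)] at h3
      constructor
      · intro hh
        have h4 : (N.snprResult u v a w x y u'').inDeg t = 2 := hh
        show N.inDeg t = 2; omega
      · intro hh
        have h4 : N.inDeg t = 2 := hh
        show (N.snprResult u v a w x y u'').inDeg t = 2; omega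
    have hMRetu'' : ¬ (N.snprResult u v a w x y u'').IsRet u'' := by
      intro hh
      have h4 : (N.snprResult u v a w x y u'').inDeg u'' = 2 := hh
      have h3 := hinRel u''
      rw [if_neg (fun hh : u = u'' => hu''u hh.symm), if_pos rfl] at h3
      omega
    have hTC : (N.snprResult u v a w x y u'').TreeChild := by
      intro t htV htout
      have hMV : t ∈ insert u'' (N.V.erase u) := htV
      rcases Finset.mem_insert.1 hMV with rfl | htV'
      · -- t = u''
        obtain ⟨c, hc, hcr⟩ := htc u huV houtpos
        rcases hmemU c hc with h1 | h1
        · refine ⟨v, by rw [hME]; simp, ?_⟩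
          rw [h1] at hcr
          exact fun hh => hcr ((hRetIff v hneuv.symm hu''v.symm).1 hh)
        · refine ⟨w, by rw [hME]; simp, ?_⟩
          rw [h1] at hcr
          exact fun hh => hcr ((hRetIff w hneuw.symm hu''w.symm).1 hh)
      · rcases Finset.mem_erase.1 htV' with ⟨htu, htNV⟩
        by_cases hta : t = a
        · subst hta
          exact ⟨u'', by rw [hME]; simp, hMRetu''⟩
        · have htu'' : t ≠ u'' := fun hh => hu'' (hh ▸ htNV)
          have houtN : 1 ≤ N.outDeg t := by
            have h3 := houtRel t
            rw [if_neg (fun hh => htu hh.symm), if_neg (fun hh => htu'' hh.symm)] at h3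
            omega
          obtain ⟨c, hc, hcr⟩ := htc t htNV houtN
          have hcu : c ≠ u := fun hh => hta (hparU t (hh ▸ hc))
          have hcu'' : c ≠ u'' := fun hh => hu'' (hh ▸ (hN.edge_mem _ hc).2)
          have hcM : (t, c) ∈ (N.snprResult u v a w x y u'').E := by
            have h5 : (t, c) ∈ N.E := hc
            rw [hNE] at h5
            rcases Multiset.mem_cons.1 h5 with h6 | h6
            · exact absurd (congrArg Prod.fst h6) htu
            rcases Multiset.mem_cons.1 h6 with h7 | h7
            · exact absurd (congrArg Prod.fst h7) hta
            rcases Multiset.mem_cons.1 h7 with h8 | h8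
            · exact absurd (congrArg Prod.fst h8) htu
            rw [hME]
            exact Multiset.mem_cons_of_mem (Multiset.mem_cons_of_mem
              (Multiset.mem_cons_of_mem h8))
          exact ⟨c, hcM, fun hh => hcr ((hRetIff c hcu hcu'').1 hh)⟩
    constructor
    · intro _
      by_cases hrv : N.IsRet v
      · refine Or.inl ⟨hrv, ?_⟩
        rcases hF with h | h
        · have hy : y = u := congrArg Prod.snd h
          rw [hy]; exact hnotRetU
        · have hy : y = w := congrArg Prod.snd h
          rw [hy]
          obtain ⟨c, hc, hcr⟩ := htc u huV houtpos
          rcases hmemU c hc with h1 | h1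
          · rw [h1] at hcr; exact absurd hrv hcr
          · rw [h1] at hcr; exact hcr
      · by_cases hcr : N.Critical (u, v)
        · exact Or.inr (Or.inr (Or.inl ⟨hcr, hFiff.2 hF⟩))
        · exact Or.inr (Or.inl ⟨⟨hnotRetU, hrv⟩, hcr⟩)
    · intro _; exact hTC
  · -- `f` is not incident to `u`
    have hF' := hF
    push_neg at hF'
    obtain ⟨hF1, hF2⟩ := hF'
    have hxu : x ≠ u := fun h => hF (hFiff.1 (Or.inl h))
    have hyu : y ≠ u := fun h => hF (hFiff.1 (Or.inr h))
    have hxyX : (x, y) ∈ ((N.E.erase (u, v)).erase (a, u)).erase (u, w) :=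
      (Multiset.mem_erase_of_ne hF2).2 ((Multiset.mem_erase_of_ne hF1).2 hf)
    obtain ⟨Z, hZ⟩ : ∃ Z : Multiset (ℕ × ℕ),
        Z = ((((N.E.erase (u, v)).erase (a, u)).erase (u, w)).erase (x, y)) := ⟨_, rfl⟩
    have hNE : N.E = (u, v) ::ₘ (a, u) ::ₘ (u, w) ::ₘ (x, y) ::ₘ Z := by
      rw [hZ, Multiset.cons_erase hxyX, Multiset.cons_erase hX3, Multiset.cons_erase hX2,
        Multiset.cons_erase he]
    have hME : (N.snprResult u v a w x y u'').E =
        (a, w) ::ₘ (x, u'') ::ₘ (u'', y) ::ₘ (u'', v) ::ₘ Z := by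
      simp only [RawNet.snprResult]
      rw [if_neg hF]
      have hXZ : ((N.E.erase (u, v)).erase (a, u)).erase (u, w) = (x, y) ::ₘ Z := by
        rw [hZ, Multiset.cons_erase hxyX]
      rw [hXZ]
      have h1 : ((x, y) ::ₘ Z) + {(a, w)} = (x, y) ::ₘ (a, w) ::ₘ Z := by
        rw [add_comm, Multiset.singleton_add, Multiset.cons_swap]
      rw [h1, Multiset.erase_cons_head]
      exact cons_add_three _ _ _ _ _
    have hinRel : ∀ t : ℕ, (N.snprResult u v a w x y u'').inDeg t + (if u = t then 1 else 0)
        = N.inDeg t + (if u'' = t then 1 else 0) := by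
      intro t
      rw [inDeg_eq_countP, inDeg_eq_countP, hME, hNE]
      simp only [Multiset.countP_cons]
      split_ifs <;> omega
    have houtRel : ∀ t : ℕ, (N.snprResult u v a w x y u'').outDeg t + (if u = t then 2 else 0)
        = N.outDeg t + (if u'' = t then 2 else 0) := by
      intro t
      rw [outDeg_eq_countP, outDeg_eq_countP, hME, hNE]
      simp only [Multiset.countP_cons]
      split_ifs <;> omega
    have hRetIff : ∀ t, t ≠ u → t ≠ u'' →
        ((N.snprResult u v a w x y u'').IsRet t ↔ N.IsRet t) := by
      intro t h1 h2
      have h3 := hinRel t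
      rw [if_neg (fun hh => h1 hh.symm), if_neg (fun hh => h2 hh.symm)] at h3
      constructor
      · intro hh
        have h4 : (N.snprResult u v a w x y u'').inDeg t = 2 := hh
        show N.inDeg t = 2; omega
      · intro hh
        have h4 : N.inDeg t = 2 := hh
        show (N.snprResult u v a w x y u'').inDeg t = 2; omega
    have hMRetu'' : ¬ (N.snprResult u v a w x y u'').IsRet u'' := by
      intro hh
      have h4 : (N.snprResult u v a w x y u'').inDeg u'' = 2 := hh
      have h3 := hinRel u''
      rw [if_neg (fun hh2 : u = u'' => hu''u hh2.symm), if_pos rfl] at h3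
      omega
    have hZE : ∀ g ∈ Z, g ∈ N.E := by
      intro g hg
      rw [hNE]
      exact Multiset.mem_cons_of_mem (Multiset.mem_cons_of_mem (Multiset.mem_cons_of_mem
        (Multiset.mem_cons_of_mem hg)))
    have hZae : ∀ g ∈ Z, g ∈ N.E.erase (a, u) := by
      intro g hg
      rw [hZ] at hg
      have h8 : g ∈ (N.E.erase (u, v)).erase (a, u) :=
        Multiset.mem_of_mem_erase (Multiset.mem_of_mem_erase hg)
      rw [Multiset.erase_comm] at h8
      exact Multiset.mem_of_mem_erase h8
    have hmainIff : (N.snprResult u v a w x y u'').TreeChild ↔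
        ((¬ N.IsRet y ∨ ¬ N.IsRet v) ∧ (¬ N.IsRet w ∨ x = a ∨
          ∃ b, (a, b) ∈ N.E.erase (a, u) ∧ ¬ N.IsRet b)) := by
      constructor
      · intro hTC
        constructor
        · -- consider the fresh vertex u''
          have h1 : u'' ∈ (N.snprResult u v a w x y u'').V := Finset.mem_insert_self _ _
          have h2 : 1 ≤ (N.snprResult u v a w x y u'').outDeg u'' := by
            have h3 := houtRel u''
            rw [if_neg (fun hh : u = u'' => hu''u hh.symm), if_pos rfl] at h3
            omega
          obtain ⟨c, hc, hcr⟩ := hTC u'' h1 h2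
          rw [hME] at hc
          rcases Multiset.mem_cons.1 hc with h4 | h4
          · exact absurd (congrArg Prod.fst h4) hu''a
          rcases Multiset.mem_cons.1 h4 with h5 | h5
          · exact absurd (congrArg Prod.fst h5) hu''x
          rcases Multiset.mem_cons.1 h5 with h6 | h6
          · have hcy : c = y := (Prod.ext_iff.1 h6).2
            rw [hcy] at hcr
            exact Or.inl (fun hh => hcr ((hRetIff y hyu (fun hh2 => hu''y hh2.symm)).2 hh))
          rcases Multiset.mem_cons.1 h6 with h7 | h7
          · have hcv : c = v := (Prod.ext_iff.1 h7).2
            rw [hcv] at hcr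
            exact Or.inr (fun hh => hcr ((hRetIff v hneuv.symm (fun hh2 => hu''v hh2.symm)).2 hh))
          · exact absurd ((hN.edge_mem _ (hZE _ h7)).1) hu''
        · -- consider the vertex a
          have h1 : a ∈ (N.snprResult u v a w x y u'').V :=
            Finset.mem_insert.2 (Or.inr (Finset.mem_erase.2 ⟨hneau, haV⟩))
          have hawM : (a, w) ∈ (N.snprResult u v a w x y u'').E := by
            rw [hME]; exact Multiset.mem_cons_self _ _
          have h2 : 1 ≤ (N.snprResult u v a w x y u'').outDeg a := outDeg_pos_of_mem hawM
          obtain ⟨c, hc, hcr⟩ := hTC a h1 h2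
          rw [hME] at hc
          rcases Multiset.mem_cons.1 hc with h4 | h4
          · have hcw : c = w := (Prod.ext_iff.1 h4).2
            rw [hcw] at hcr
            exact Or.inl (fun hh => hcr ((hRetIff w hneuw.symm (fun hh2 => hu''w hh2.symm)).2 hh))
          rcases Multiset.mem_cons.1 h4 with h5 | h5
          · exact Or.inr (Or.inl (congrArg Prod.fst h5).symm)
          rcases Multiset.mem_cons.1 h5 with h6 | h6
          · exact absurd (congrArg Prod.fst h6).symm hu''a
          rcases Multiset.mem_cons.1 h6 with h7 | h7
          · exact absurd (congrArg Prod.fst h7).symm hu''a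
          · have hcerase : (a, c) ∈ N.E.erase (a, u) := hZae _ h7
            have hcu : c ≠ u := by
              intro hh; rw [hh] at hcerase; exact hnotau hcerase
            have hcu'' : c ≠ u'' := fun hh => hu'' (hh ▸ (hN.edge_mem _ (hZE _ h7)).2)
            exact Or.inr (Or.inr ⟨c, hcerase,
              fun hh => hcr ((hRetIff c hcu hcu'').2 hh)⟩)
      · rintro ⟨hG, hA⟩
        intro t htV htout
        have hMV : t ∈ insert u'' (N.V.erase u) := htV
        rcases Finset.mem_insert.1 hMV with rfl | htV'
        · rcases hG with h | h
          · exact ⟨y, by rw [hME]; simp, fun hh => h ((hRetIff y hyu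
              (fun hh2 => hu''y hh2.symm)).1 hh)⟩
          · exact ⟨v, by rw [hME]; simp, fun hh => h ((hRetIff v hneuv.symm
              (fun hh2 => hu''v hh2.symm)).1 hh)⟩
        · rcases Finset.mem_erase.1 htV' with ⟨htu, htNV⟩
          have htu'' : t ≠ u'' := fun hh => hu'' (hh ▸ htNV)
          by_cases hta : t = a
          · rw [hta]
            rcases hA with h | h | ⟨b, hbE, hbr⟩
            · exact ⟨w, by rw [hME]; simp, fun hh => h ((hRetIff w hneuw.symm
                (fun hh2 => hu''w hh2.symm)).1 hh)⟩
            · exact ⟨u'', by rw [hME, ← h]; simp, hMRetu''⟩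
            · have hbneu : b ≠ u := by
                intro hh; rw [hh] at hbE; exact hnotau hbE
              have hbE' : (a, b) ∈ N.E := Multiset.mem_of_mem_erase hbE
              have hbu'' : b ≠ u'' := fun hh => hu'' (hh ▸ (hN.edge_mem _ hbE').2)
              by_cases hbw : b = w
              · refine ⟨w, by rw [hME]; simp, fun hh => ?_⟩
                rw [hbw] at hbr
                exact hbr ((hRetIff w hneuw.symm (fun hh2 => hu''w hh2.symm)).1 hh)
              · by_cases hxa : x = a
                · exact ⟨u'', by rw [hME, ← hxa]; simp, hMRetu''⟩
                · have hbM : (a, b) ∈ (N.snprResult u v a w x y u'').E := by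
                    have h5 : (a, b) ∈ N.E := hbE'
                    rw [hNE] at h5
                    rcases Multiset.mem_cons.1 h5 with h6 | h6
                    · exact absurd (congrArg Prod.fst h6) hneau
                    rcases Multiset.mem_cons.1 h6 with h7 | h7
                    · exact absurd (congrArg Prod.snd h7) hbneu
                    rcases Multiset.mem_cons.1 h7 with h8 | h8
                    · exact absurd (congrArg Prod.fst h8) hneau
                    rcases Multiset.mem_cons.1 h8 with h9 | h9
                    · exact absurd (congrArg Prod.fst h9).symm hxa
                    rw [hME]
                    exact Multiset.mem_cons_of_mem (Multiset.mem_cons_of_mem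
                      (Multiset.mem_cons_of_mem (Multiset.mem_cons_of_mem h9)))
                  exact ⟨b, hbM, fun hh => hbr ((hRetIff b hbneu hbu'').1 hh)⟩
          · by_cases htx : t = x
            · rw [htx]
              exact ⟨u'', by rw [hME]; simp, hMRetu''⟩
            · have houtN : 1 ≤ N.outDeg t := by
                have h3 := houtRel t
                rw [if_neg (fun hh => htu hh.symm), if_neg (fun hh => htu'' hh.symm)] at h3
                omega
              obtain ⟨c, hc, hcr⟩ := htc t htNV houtN
              have hcu : c ≠ u := fun hh => hta (hparU t (hh ▸ hc))
              have hcu'' : c ≠ u'' := fun hh => hu'' (hh ▸ (hN.edge_mem _ hc).2)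
              have hcM : (t, c) ∈ (N.snprResult u v a w x y u'').E := by
                have h5 : (t, c) ∈ N.E := hc
                rw [hNE] at h5
                rcases Multiset.mem_cons.1 h5 with h6 | h6
                · exact absurd (congrArg Prod.fst h6) htu
                rcases Multiset.mem_cons.1 h6 with h7 | h7
                · exact absurd (congrArg Prod.fst h7) hta
                rcases Multiset.mem_cons.1 h7 with h8 | h8
                · exact absurd (congrArg Prod.fst h8) htu
                rcases Multiset.mem_cons.1 h8 with h9 | h9
                · exact absurd (congrArg Prod.fst h9) htx
                rw [hME]
                exact Multiset.mem_cons_of_mem (Multiset.mem_cons_of_mem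
                  (Multiset.mem_cons_of_mem (Multiset.mem_cons_of_mem h9)))
              exact ⟨c, hcM, fun hh => hcr ((hRetIff c hcu hcu'').1 hh)⟩
    rw [hmainIff]
    constructor
    · rintro ⟨hG, hA⟩
      by_cases hrv : N.IsRet v
      · rcases hG with h | h
        · exact Or.inl ⟨hrv, h⟩
        · exact absurd hrv h
      · by_cases hrw : N.IsRet w
        · have hA' : x = a ∨ ∃ b, (a, b) ∈ N.E.erase (a, u) ∧ ¬ N.IsRet b := by
            rcases hA with h | h | h
            · exact absurd hrw h
            · exact Or.inl h
            · exact Or.inr h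
          rcases hA' with hxa | ⟨b, hbE, hbr⟩
          · rcases haCases with ⟨hroot, hfil⟩ | ⟨hra, hfil⟩ | ⟨b, hbneu, hina, hbE, hfil⟩
            · exact absurd (hFiff.1 (hglobal hroot hrw)) hF
            · exfalso
              have h1 : (a, y) ∈ N.E := by rw [← hxa]; exact hfE
              have h2 : (a, y) ∈ ({(a, u)} : Multiset (ℕ × ℕ)) := by
                rw [← hfil]; exact Multiset.mem_filter.2 ⟨h1, rfl⟩
              exact hyu (congrArg Prod.snd (Multiset.mem_singleton.1 h2))
            · have h1 : (a, y) ∈ N.E := by rw [← hxa]; exact hfE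
              have h2 : (a, y) ∈ ({(a, u), (a, b)} : Multiset (ℕ × ℕ)) := by
                rw [← hfil]; exact Multiset.mem_filter.2 ⟨h1, rfl⟩
              have hyb : y = b := by
                rcases Multiset.mem_cons.1 h2 with h3 | h3
                · exact absurd (congrArg Prod.snd h3) hyu
                · exact congrArg Prod.snd (Multiset.mem_singleton.1 h3)
              by_cases hry : N.IsRet y
              · exact Or.inr (Or.inr (Or.inr (Or.inl ⟨hrv, by rw [hxa]; exact ha, hry,
                  w, hw, hrw⟩)))
              · refine Or.inr (Or.inl ⟨⟨hnotRetU, hrv⟩, fun hc => ?_⟩)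
                rcases (hcrit.1 hc).2.2 with hra | ⟨b', hb', hrb'⟩
                · have h4 : N.inDeg a = 2 := hra; omega
                · rw [hUniq b hfil b' hb', ← hyb] at hrb'
                  exact hry hrb'
          · refine Or.inr (Or.inl ⟨⟨hnotRetU, hrv⟩, fun hc => ?_⟩)
            rcases haCases with ⟨hroot, hfil⟩ | ⟨hra, hfil⟩ | ⟨b0, hb0neu, hina, hb0E, hfil⟩
            · exact hOnly hfil b hbE
            · exact hOnly hfil b hbE
            · rcases (hcrit.1 hc).2.2 with hra | ⟨b', hb', hrb'⟩
              · have h4 : N.inDeg a = 2 := hra; omega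
              · rw [hUniq b0 hfil b' hb'] at hrb'
                rw [hUniq b0 hfil b hbE] at hbr
                exact hbr hrb'
        · exact Or.inr (Or.inl ⟨⟨hnotRetU, hrv⟩, fun hc => hrw (hcrit.1 hc).2.1⟩)
    · rintro (⟨h1, h2⟩ | ⟨hp, hnc⟩ | ⟨hc, hxy⟩ | ⟨h1, h2, h3, w₂, h4, h5⟩ | ⟨h1, h2, h3, h4⟩)
      · refine ⟨Or.inl h2, ?_⟩
        obtain ⟨c, hcE, hcr⟩ := htc u huV houtpos
        rcases hmemU c hcE with h | h
        · rw [h] at hcr; exact absurd h1 hcr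
        · rw [h] at hcr; exact Or.inl hcr
      · obtain ⟨hp1, hp2⟩ := hp
        refine ⟨Or.inr hp2, ?_⟩
        by_cases hrw : N.IsRet w
        · rcases haCases with ⟨hroot, hfil⟩ | ⟨hra, hfil⟩ | ⟨b, hbneu, hina, hbE, hfil⟩
          · exact absurd (hFiff.1 (hglobal hroot hrw)) hF
          · exact absurd (hcrit.2 ⟨hp2, hrw, Or.inl hra⟩) hnc
          · by_cases hrb : N.IsRet b
            · exact absurd (hcrit.2 ⟨hp2, hrw, Or.inr ⟨b, hbE, hrb⟩⟩) hnc
            · exact Or.inr (Or.inr ⟨b, hbE, hrb⟩)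
        · exact Or.inl hrw
      · exact absurd (hFiff.1 hxy) hF
      · exact ⟨Or.inr h1, Or.inr (Or.inl (hparU x h2))⟩
      · exact ⟨Or.inr h1, Or.inr (Or.inl (hparU x h2))⟩
end
end

section
/- Let N be a tree-child network on n ≥ 2 leaves with r reticulations. Then the number of tree-child respecting SNPR+ operations on N equals 4n² − 2nr − 8n − 2r² + 2r + 4 − Σ_{e ∈ E_{PS}} δ_T(e). -/
/-!
Formalization of rooted binary phylogenetic networks (directed multigraphs with
labelled leaves), tree-child networks, and the SNPR / SNPR+ / SNPR− rearrangement
operations, following Klawitter, "The SNPR neighbourhood of tree-child networks".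
-/

noncomputable section

attribute [local instance] Classical.propDecidable

namespace RawNet

variable {n : ℕ}

private lemma fcard_cons (p : ℕ × ℕ → Prop) [DecidablePred p] (a : ℕ × ℕ) (s : Multiset (ℕ × ℕ)) :
    ((a ::ₘ s).filter p).card = (if p a then 1 else 0) + (s.filter p).card := by
  rw [Multiset.filter_cons, Multiset.card_add]; split <;> simp

private lemma card_filter_snd_sum (s : Multiset (ℕ × ℕ)) (S : Finset ℕ) (P : ℕ × ℕ → Prop)
    [DecidablePred P] [∀ v : ℕ, DecidablePred (fun g : ℕ × ℕ => g.2 = v ∧ P g)]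
    [DecidablePred (fun g : ℕ × ℕ => g.2 ∈ S ∧ P g)] :
    (s.filter (fun g => g.2 ∈ S ∧ P g)).card
      = ∑ v ∈ S, (s.filter (fun g => g.2 = v ∧ P g)).card := by
  induction s using Multiset.induction with
  | empty => simp
  | cons a s ih =>
    rw [fcard_cons, ih, Finset.sum_congr rfl
      (fun v _ => fcard_cons (fun g => g.2 = v ∧ P g) a s), Finset.sum_add_distrib]
    congr 1
    by_cases hP : P a
    · simp only [hP, and_true]
      rw [Finset.sum_ite_eq S a.2 (fun _ => 1)]
    · simp [hP]

private lemma card_filter_fst_sum (s : Multiset (ℕ × ℕ)) (S : Finset ℕ) (P : ℕ × ℕ → Prop)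
    [DecidablePred P] [∀ v : ℕ, DecidablePred (fun g : ℕ × ℕ => g.1 = v ∧ P g)]
    [DecidablePred (fun g : ℕ × ℕ => g.1 ∈ S ∧ P g)] :
    (s.filter (fun g => g.1 ∈ S ∧ P g)).card
      = ∑ v ∈ S, (s.filter (fun g => g.1 = v ∧ P g)).card := by
  induction s using Multiset.induction with
  | empty => simp
  | cons a s ih =>
    rw [fcard_cons, ih, Finset.sum_congr rfl
      (fun v _ => fcard_cons (fun g => g.1 = v ∧ P g) a s), Finset.sum_add_distrib]
    congr 1
    by_cases hP : P a
    · simp only [hP, and_true]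
      rw [Finset.sum_ite_eq S a.1 (fun _ => 1)]
    · simp [hP]

private lemma one_le_filtercard {s : Multiset (ℕ × ℕ)} {p : ℕ × ℕ → Prop} [DecidablePred p]
    {g : ℕ × ℕ} (hg : g ∈ s) (hp : p g) : 1 ≤ (s.filter p).card :=
  Multiset.card_pos_iff_exists_mem.2 ⟨g, Multiset.mem_filter.2 ⟨hg, hp⟩⟩

variable {N : RawNet n} {e f g : ℕ × ℕ} {v : ℕ}

lemma mem_fst (hN : N.IsPhylo) (hg : g ∈ N.E) : g.1 ∈ N.V := (hN.edge_mem g hg).1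
lemma mem_snd (hN : N.IsPhylo) (hg : g ∈ N.E) : g.2 ∈ N.V := (hN.edge_mem g hg).2

lemma adj_of_mem (hg : g ∈ N.E) : N.Adj g.1 g.2 := by
  show (g.1, g.2) ∈ N.E; simpa using hg

lemma one_le_inDeg (hg : g ∈ N.E) : 1 ≤ N.inDeg g.2 := by
  rw [inDeg]; exact one_le_filtercard hg rfl

lemma one_le_outDeg (hg : g ∈ N.E) : 1 ≤ N.outDeg g.1 := by
  rw [outDeg]; exact one_le_filtercard hg rfl

lemma inDeg_eq_one (hN : N.IsPhylo) (hg : g ∈ N.E) (hr : ¬ N.IsRet g.2) :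
    N.inDeg g.2 = 1 := by
  have h1 := one_le_inDeg hg
  have hr' : N.inDeg g.2 ≠ 2 := hr
  rcases hN.classify g.2 (mem_snd hN hg) with h | ⟨i, hi⟩ | h | h
  · rw [h, hN.root_in] at h1; omega
  · rw [hi, hN.leaf_in]
  · exact h.1
  · exact absurd h.1 hr'

lemma count_eq_one (hN : N.IsPhylo) (hg : g ∈ N.E) (hr : ¬ N.IsRet g.2) :
    N.E.count g = 1 := by
  have h1 : 1 ≤ N.E.count g := Multiset.one_le_count_iff_mem.2 hg
  have h2 : N.E.count g ≤ N.inDeg g.2 := by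
    have heq : N.E.count g = (N.E.filter (fun h => h.2 = g.2)).count g := by
      rw [Multiset.count_filter, if_pos rfl]
    rw [inDeg, heq]
    exact Multiset.count_le_card g _
  have := inDeg_eq_one hN hg hr
  omega

lemma not_edgeDesc_self (hN : N.IsPhylo) (hg : g ∈ N.E) : ¬ N.EdgeDesc g g := by
  rintro (h | h)
  · refine hN.acyclic g.2 (Relation.TransGen.single ?_)
    have := adj_of_mem hg
    rwa [h] at this
  · exact hN.acyclic g.2 (h.trans (Relation.TransGen.single (adj_of_mem hg)))

lemma no_ret_child_of_outDeg_one (htc : N.TreeChild) (hv : v ∈ N.V)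
    (hout : N.outDeg v = 1) (hg : g ∈ N.E) (hg1 : g.1 = v) (hr : N.IsRet g.2) : False := by
  obtain ⟨w, hw, hwr⟩ := htc v hv (by omega)
  obtain ⟨a, ha⟩ := Multiset.card_eq_one.mp hout
  have hgf : g ∈ N.E.filter (fun h => h.1 = v) := Multiset.mem_filter.2 ⟨hg, hg1⟩
  have hwf : (v, w) ∈ N.E.filter (fun h => h.1 = v) := Multiset.mem_filter.2 ⟨hw, rfl⟩
  rw [ha, Multiset.mem_singleton] at hgf hwf
  rw [hgf, ← hwf] at hr
  exact hwr hr

lemma ret_tail_inner (hN : N.IsPhylo) (htc : N.TreeChild) (hg : g ∈ N.E)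
    (hr : N.IsRet g.2) : N.inDeg g.1 = 1 ∧ N.outDeg g.1 = 2 := by
  rcases hN.classify g.1 (mem_fst hN hg) with h | ⟨i, hi⟩ | h | h
  · exact absurd (no_ret_child_of_outDeg_one htc hN.root_mem hN.root_out hg h hr) not_false
  · have := one_le_outDeg hg
    rw [hi, hN.leaf_out] at this; omega
  · exact h
  · exact absurd (no_ret_child_of_outDeg_one htc (mem_fst hN hg) h.2 hg rfl hr) not_false

lemma two_le_outDeg (he : e ∈ N.E) {w : ℕ} (hw : (e.1, w) ∈ N.E.erase e) :
    2 ≤ N.outDeg e.1 := by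
  rw [outDeg, ← Multiset.cons_erase he, fcard_cons, if_pos rfl]
  have : 1 ≤ ((N.E.erase e).filter (fun h => h.1 = e.1)).card :=
    one_le_filtercard hw rfl
  omega

lemma not_ret_of_two_le_outDeg (hN : N.IsPhylo) (hv : v ∈ N.V)
    (h2 : 2 ≤ N.outDeg v) : ¬ N.IsRet v := by
  intro hr
  have hr' : N.inDeg v = 2 := hr
  rcases hN.classify v hv with h | ⟨i, hi⟩ | h | h
  · rw [h, hN.root_in] at hr'; omega
  · rw [hi, hN.leaf_in] at hr'; omega
  · omega
  · omega

lemma outDeg_of_ret (hN : N.IsPhylo) (hv : v ∈ N.V) (hr : N.IsRet v) :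
    N.outDeg v = 1 := by
  have hr' : N.inDeg v = 2 := hr
  rcases hN.classify v hv with h | ⟨i, hi⟩ | h | h
  · rw [h, hN.root_in] at hr'; omega
  · rw [hi, hN.leaf_in] at hr'; omega
  · omega
  · exact h.2

end RawNet
namespace RawNet

variable {n : ℕ}

/-- Inner tree vertices. -/
def innerT (N : RawNet n) : Finset ℕ := N.V.filter (fun v => N.inDeg v = 1 ∧ N.outDeg v = 2)

/-- Number of reticulation out-edges at a vertex. -/
def retOut (N : RawNet n) (v : ℕ) : ℕ :=
  (N.E.filter (fun g => g.1 = v ∧ N.IsRet g.2)).card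

/-- Inner tree vertices with no reticulation child. -/
def Bset (N : RawNet n) : Finset ℕ := N.innerT.filter (fun v => N.retOut v = 0)

variable {N : RawNet n} {e f g : ℕ × ℕ} {v : ℕ}

lemma sum_deg (hN : N.IsPhylo) :
    N.E.card = ∑ v ∈ N.V, N.inDeg v ∧ N.E.card = ∑ v ∈ N.V, N.outDeg v := by
  constructor
  · have h := card_filter_snd_sum N.E N.V (fun _ => True)
    have h2 : N.E.filter (fun g => g.2 ∈ N.V ∧ True) = N.E :=
      Multiset.filter_eq_self.2 (fun g hg => ⟨mem_snd hN hg, trivial⟩)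
    rw [h2] at h
    rw [h]
    refine Finset.sum_congr rfl (fun v _ => ?_)
    rw [inDeg]
    exact congrArg _ (Multiset.filter_congr (fun g _ => by simp))
  · have h := card_filter_fst_sum N.E N.V (fun _ => True)
    have h2 : N.E.filter (fun g => g.1 ∈ N.V ∧ True) = N.E :=
      Multiset.filter_eq_self.2 (fun g hg => ⟨mem_fst hN hg, trivial⟩)
    rw [h2] at h
    rw [h]
    refine Finset.sum_congr rfl (fun v _ => ?_)
    rw [outDeg]
    exact congrArg _ (Multiset.filter_congr (fun g _ => by simp))

lemma V_split (hN : N.IsPhylo) :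
    N.V = insert N.root ((Finset.image N.leaf Finset.univ) ∪ (N.innerT ∪ N.V.filter N.IsRet)) := by
  ext v
  simp only [Finset.mem_insert, Finset.mem_union, Finset.mem_image, Finset.mem_filter,
    Finset.mem_univ, true_and, innerT]
  constructor
  · intro hv
    rcases hN.classify v hv with h | ⟨i, hi⟩ | h | h
    · exact Or.inl h
    · exact Or.inr (Or.inl ⟨i, hi.symm⟩)
    · exact Or.inr (Or.inr (Or.inl ⟨hv, h⟩))
    · exact Or.inr (Or.inr (Or.inr ⟨hv, h.1⟩))
  · rintro (h | ⟨i, hi⟩ | ⟨h, _⟩ | ⟨h, _⟩)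
    · exact h ▸ hN.root_mem
    · exact hi ▸ hN.leaf_mem i
    · exact h
    · exact h

lemma edge_count_eqs (hN : N.IsPhylo) :
    N.E.card = n + N.innerT.card + 2 * N.numRet ∧
    N.E.card = 1 + 2 * N.innerT.card + N.numRet := by
  obtain ⟨hin, hout⟩ := sum_deg hN
  have hrootnot : N.root ∉ (Finset.image N.leaf Finset.univ) ∪ (N.innerT ∪ N.V.filter N.IsRet) := by
    simp only [Finset.mem_union, Finset.mem_image, Finset.mem_filter, Finset.mem_univ,
      true_and, innerT, not_or]
    refine ⟨?_, ?_, ?_⟩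
    · rintro ⟨i, hi⟩
      have := hN.leaf_in i
      rw [hi, hN.root_in] at this; omega
    · rintro ⟨_, h, _⟩
      rw [hN.root_in] at h; omega
    · rintro ⟨_, h⟩
      have h' : N.inDeg N.root = 2 := h
      rw [hN.root_in] at h'; omega
  have hd1 : Disjoint (Finset.image N.leaf Finset.univ) (N.innerT ∪ N.V.filter N.IsRet) := by
    rw [Finset.disjoint_left]
    rintro a ha hb
    simp only [Finset.mem_image, Finset.mem_univ, true_and] at ha
    obtain ⟨i, hi⟩ := ha
    simp only [Finset.mem_union, Finset.mem_filter, innerT] at hb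
    rcases hb with ⟨_, _, h⟩ | ⟨_, h⟩
    · rw [← hi, hN.leaf_out] at h; omega
    · have h' : N.inDeg a = 2 := h
      rw [← hi, hN.leaf_in] at h'; omega
  have hd2 : Disjoint N.innerT (N.V.filter N.IsRet) := by
    rw [Finset.disjoint_left]
    rintro a ha hb
    simp only [Finset.mem_filter, innerT] at ha hb
    have h' : N.inDeg a = 2 := hb.2
    omega
  have hleafcard : (Finset.image N.leaf Finset.univ).card = n := by
    rw [Finset.card_image_of_injective _ hN.leaf_inj, Finset.card_univ, Fintype.card_fin]
  have hsum : ∀ F : ℕ → ℕ, ∑ v ∈ N.V, F v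
      = F N.root + (∑ v ∈ Finset.image N.leaf Finset.univ, F v)
        + ((∑ v ∈ N.innerT, F v) + ∑ v ∈ N.V.filter N.IsRet, F v) := by
    intro F
    conv_lhs => rw [V_split hN]
    rw [Finset.sum_insert hrootnot, Finset.sum_union hd1, Finset.sum_union hd2]
    ring
  constructor
  · rw [hin, hsum]
    rw [hN.root_in]
    have h1 : ∑ v ∈ Finset.image N.leaf Finset.univ, N.inDeg v = n := by
      rw [Finset.sum_image (fun x _ y _ h => hN.leaf_inj h)]
      simp [hN.leaf_in]
    have h2 : ∑ v ∈ N.innerT, N.inDeg v = N.innerT.card := by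
      have := Finset.sum_congr rfl (fun v hv => (Finset.mem_filter.1 hv).2.1 :
        ∀ v ∈ N.innerT, N.inDeg v = 1)
      rw [this, Finset.sum_const, smul_eq_mul, mul_one]
    have h3 : ∑ v ∈ N.V.filter N.IsRet, N.inDeg v = 2 * N.numRet := by
      have := Finset.sum_congr rfl (fun v hv => (Finset.mem_filter.1 hv).2 :
        ∀ v ∈ N.V.filter N.IsRet, N.inDeg v = 2)
      rw [this, Finset.sum_const, smul_eq_mul, numRet, mul_comm]
    rw [h1, h2, h3]; omega
  · rw [hout, hsum]
    rw [hN.root_out]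
    have h1 : ∑ v ∈ Finset.image N.leaf Finset.univ, N.outDeg v = 0 := by
      rw [Finset.sum_image (fun x _ y _ h => hN.leaf_inj h)]
      simp [hN.leaf_out]
    have h2 : ∑ v ∈ N.innerT, N.outDeg v = 2 * N.innerT.card := by
      have := Finset.sum_congr rfl (fun v hv => (Finset.mem_filter.1 hv).2.2 :
        ∀ v ∈ N.innerT, N.outDeg v = 2)
      rw [this, Finset.sum_const, smul_eq_mul, mul_comm]
    have h3 : ∑ v ∈ N.V.filter N.IsRet, N.outDeg v = N.numRet := by
      have := Finset.sum_congr rfl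
        (fun v hv => outDeg_of_ret hN (Finset.mem_filter.1 hv).1 (Finset.mem_filter.1 hv).2 :
        ∀ v ∈ N.V.filter N.IsRet, N.outDeg v = 1)
      rw [this, Finset.sum_const, smul_eq_mul, numRet, mul_one]
    rw [h1, h2, h3]; omega

lemma ret_edges_card (hN : N.IsPhylo) :
    (N.E.filter (fun g => N.IsRet g.2)).card = 2 * N.numRet := by
  have h := card_filter_snd_sum N.E (N.V.filter N.IsRet) (fun _ => True)
  have h2 : N.E.filter (fun g => g.2 ∈ N.V.filter N.IsRet ∧ True)
      = N.E.filter (fun g => N.IsRet g.2) := by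
    refine Multiset.filter_congr (fun g hg => ?_)
    simp only [Finset.mem_filter, and_true]
    exact ⟨fun h => h.2, fun h => ⟨mem_snd hN hg, h⟩⟩
  rw [h2] at h
  rw [h, numRet, mul_comm]
  have hterm : ∀ v ∈ N.V.filter N.IsRet,
      (N.E.filter (fun g => g.2 = v ∧ True)).card = 2 := by
    intro v hv
    have hv2 : N.inDeg v = 2 := (Finset.mem_filter.1 hv).2
    rw [← hv2, inDeg]
    exact congrArg _ (Multiset.filter_congr (fun g _ => by simp))
  rw [Finset.sum_congr rfl hterm, Finset.sum_const, smul_eq_mul]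

lemma tree_edges_card (hN : N.IsPhylo) :
    N.E.card = (N.E.filter (fun g => ¬ N.IsRet g.2)).card + 2 * N.numRet := by
  have := Multiset.filter_add_not (fun g : ℕ × ℕ => N.IsRet g.2) N.E
  have hc := congrArg Multiset.card this
  rw [Multiset.card_add, ret_edges_card hN] at hc
  omega

end RawNet
namespace RawNet

variable {n : ℕ} {N : RawNet n} {e f g : ℕ × ℕ} {v : ℕ}

lemma retOut_le_one (htc : N.TreeChild) (hv : v ∈ N.V) (hout : N.outDeg v = 2) :
    N.retOut v ≤ 1 := by
  obtain ⟨w, hw, hwr⟩ := htc v hv (by omega)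
  have heq : N.retOut v = ((N.E.filter (fun g => g.1 = v)).filter (fun g => N.IsRet g.2)).card := by
    rw [retOut, Multiset.filter_filter]
    exact congrArg _ (Multiset.filter_congr (fun g _ => and_comm))
  have hmem : (v, w) ∈ N.E.filter (fun g => g.1 = v) := Multiset.mem_filter.2 ⟨hw, rfl⟩
  rw [heq, ← Multiset.cons_erase hmem, Multiset.filter_cons, if_neg (show ¬ N.IsRet (v, w).2 from hwr)]
  have h1 : (((N.E.filter (fun g => g.1 = v)).erase (v, w)).filter (fun g => N.IsRet g.2)).card
      ≤ ((N.E.filter (fun g => g.1 = v)).erase (v, w)).card :=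
    Multiset.card_le_card (Multiset.filter_le _ _)
  have h2 : ((N.E.filter (fun g => g.1 = v)).erase (v, w)).card
      = (N.E.filter (fun g => g.1 = v)).card - 1 := by
    rw [Multiset.card_erase_of_mem hmem, Nat.pred_eq_sub_one]
  have h3 : (N.E.filter (fun g => g.1 = v)).card = 2 := hout
  simp only [Multiset.card_add, Multiset.card_zero]
  omega

lemma sum_retOut (hN : N.IsPhylo) (htc : N.TreeChild) :
    ∑ v ∈ N.innerT, N.retOut v = 2 * N.numRet := by
  have h := card_filter_fst_sum N.E N.innerT (fun g => N.IsRet g.2)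
  have h2 : N.E.filter (fun g => g.1 ∈ N.innerT ∧ N.IsRet g.2)
      = N.E.filter (fun g => N.IsRet g.2) := by
    refine Multiset.filter_congr (fun g hg => ?_)
    exact ⟨fun h => h.2, fun h =>
      ⟨Finset.mem_filter.2 ⟨mem_fst hN hg, ret_tail_inner hN htc hg h⟩, h⟩⟩
  rw [h2, ret_edges_card hN] at h
  simp only [retOut]
  exact h.symm

lemma innerT_split (hN : N.IsPhylo) (htc : N.TreeChild) :
    N.innerT.card = N.Bset.card + 2 * N.numRet := by
  have hsplit := Finset.card_filter_add_card_filter_not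
    (s := N.innerT) (p := fun v => N.retOut v = 0)
  have hsum := sum_retOut hN htc
  rw [← Finset.sum_filter_add_sum_filter_not N.innerT (fun v => N.retOut v = 0)] at hsum
  have hz : ∑ v ∈ N.innerT.filter (fun v => N.retOut v = 0), N.retOut v = 0 :=
    Finset.sum_eq_zero (fun v hv => (Finset.mem_filter.1 hv).2)
  have ho : ∑ v ∈ N.innerT.filter (fun v => ¬ N.retOut v = 0), N.retOut v
      = (N.innerT.filter (fun v => ¬ N.retOut v = 0)).card := by
    have : ∀ v ∈ N.innerT.filter (fun v => ¬ N.retOut v = 0), N.retOut v = 1 := by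
      intro v hv
      obtain ⟨hvi, hvnz⟩ := Finset.mem_filter.1 hv
      obtain ⟨hvV, _, hout2⟩ := Finset.mem_filter.1 hvi
      have := retOut_le_one htc hvV hout2
      omega
    rw [Finset.sum_congr rfl this, Finset.sum_const, smul_eq_mul, mul_one]
  rw [hz, ho, zero_add] at hsum
  rw [Bset] at *
  omega

lemma PS_iff (hN : N.IsPhylo) (htc : N.TreeChild) (he : e ∈ N.E) :
    N.PSedge e ↔ e.1 ∈ N.Bset := by
  constructor
  · rintro ⟨⟨hr1, hr2⟩, w, hw, hwr⟩
    have h2 := two_le_outDeg he hw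
    have he1V := mem_fst hN he
    have hinner : N.inDeg e.1 = 1 ∧ N.outDeg e.1 = 2 := by
      rcases hN.classify e.1 he1V with h | ⟨i, hi⟩ | h | h
      · rw [h, hN.root_out] at h2; omega
      · rw [hi, hN.leaf_out] at h2; omega
      · exact h
      · exact absurd h.1 hr1
    have hro : N.retOut e.1 = 0 := by
      rw [retOut, Multiset.card_eq_zero, Multiset.filter_eq_nil]
      rintro g hg ⟨hg1, hgr⟩
      have hge : g ≠ e := fun h => hr2 (h ▸ hgr)
      have hgw : g ≠ (e.1, w) := fun h => hwr (by rw [h] at hgr; exact hgr)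
      have hg' : g ∈ (N.E.erase e).erase (e.1, w) := by
        rw [Multiset.mem_erase_of_ne hgw, Multiset.mem_erase_of_ne hge]; exact hg
      have h3 : 3 ≤ N.outDeg e.1 := by
        rw [outDeg, ← Multiset.cons_erase he, ← Multiset.cons_erase hw,
          ← Multiset.cons_erase hg', fcard_cons, fcard_cons, fcard_cons]
        simp only [hg1]
        simp
        omega
      omega
    exact Finset.mem_filter.2 ⟨Finset.mem_filter.2 ⟨he1V, hinner⟩, hro⟩
  · intro hB
    obtain ⟨hvi, hro⟩ := Finset.mem_filter.1 hB
    obtain ⟨he1V, hin1, hout2⟩ := Finset.mem_filter.1 hvi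
    have hr1 : ¬ N.IsRet e.1 := fun h => by
      have h' : N.inDeg e.1 = 2 := h; omega
    have hr2 : ¬ N.IsRet e.2 := by
      intro h
      have := one_le_filtercard (p := fun g => g.1 = e.1 ∧ N.IsRet g.2) he ⟨rfl, h⟩
      rw [retOut] at hro
      omega
    have hmem : e ∈ N.E.filter (fun g => g.1 = e.1) := Multiset.mem_filter.2 ⟨he, rfl⟩
    have hco : (N.E.filter (fun g => g.1 = e.1)).card = 2 := hout2
    have hc : ((N.E.filter (fun g => g.1 = e.1)).erase e).card = 1 := by
      rw [Multiset.card_erase_of_mem hmem, hco]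
      rfl
    obtain ⟨a, ha⟩ := Multiset.card_eq_one.mp hc
    have haout : a ∈ (N.E.filter (fun g => g.1 = e.1)).erase e := by
      rw [ha]; exact Multiset.mem_singleton_self a
    have ha1 : a.1 = e.1 := (Multiset.mem_filter.1 (Multiset.mem_of_mem_erase haout)).2
    have haE : a ∈ N.E.erase e := by
      by_cases hae : a = e
      · subst hae
        have h1 : 1 ≤ ((N.E.filter (fun g => g.1 = a.1)).erase a).count a :=
          Multiset.one_le_count_iff_mem.2 haout
        rw [Multiset.count_erase_self, Multiset.count_filter, if_pos rfl] at h1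
        have h2 : 1 ≤ (N.E.erase a).count a := by
          rw [Multiset.count_erase_self]; omega
        exact Multiset.one_le_count_iff_mem.1 h2
      · rw [Multiset.mem_erase_of_ne hae]
        exact (Multiset.mem_filter.1 (Multiset.mem_of_mem_erase haout)).1
    have hra : ¬ N.IsRet a.2 := by
      intro h
      have := one_le_filtercard (p := fun g => g.1 = e.1 ∧ N.IsRet g.2)
        (Multiset.mem_of_mem_erase haE) ⟨ha1, h⟩
      rw [retOut] at hro
      omega
    refine ⟨⟨hr1, hr2⟩, a.2, ?_, hra⟩
    have : ((e.1, a.2) : ℕ × ℕ) = a := Prod.ext ha1.symm rfl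
    rw [this]
    exact haE

lemma PS_card (hN : N.IsPhylo) (htc : N.TreeChild) :
    (N.E.filter (fun g => N.PSedge g)).card = 2 * N.Bset.card := by
  have h := card_filter_fst_sum N.E N.Bset (fun _ => True)
  have h2 : N.E.filter (fun g => g.1 ∈ N.Bset ∧ True)
      = N.E.filter (fun g => N.PSedge g) := by
    refine Multiset.filter_congr (fun g hg => ?_)
    rw [and_true]
    exact (PS_iff hN htc hg).symm
  rw [h2] at h
  have hterm : ∀ v ∈ N.Bset, (N.E.filter (fun g => g.1 = v ∧ True)).card = 2 := by
    intro v hv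
    obtain ⟨hvi, _⟩ := Finset.mem_filter.1 hv
    obtain ⟨_, _, hout2⟩ := Finset.mem_filter.1 hvi
    rw [← hout2, outDeg]
    exact congrArg _ (Multiset.filter_congr (fun g _ => by simp))
  rw [h, Finset.sum_congr rfl hterm, Finset.sum_const, smul_eq_mul, mul_comm]

end RawNet
namespace RawNet

variable {n : ℕ} {N : RawNet n} {e f : ℕ × ℕ} {u' v' : ℕ}

private lemma pair_eq {a b c d : ℕ} (h : ((a, b) : ℕ × ℕ) = (c, d)) : a = c ∧ b = d := by
  simpa [Prod.ext_iff] using h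

lemma fresh_not_mem (N : RawNet n) (k : ℕ) (hk : 1 ≤ k) : N.V.sup id + k ∉ N.V := by
  intro h
  have := Finset.le_sup (f := id) h
  simp only [id] at this
  omega

lemma not_tc_diag (hN : N.IsPhylo) (he : e ∈ N.E) (hu : u' ∉ N.V) (hv : v' ∉ N.V)
    (huv : u' ≠ v') : ¬ (N.snprPlusResult e e u' v').TreeChild := by
  intro h
  set M := N.snprPlusResult e e u' v' with hM
  have hME : M.E = (N.E.erase e) + {(e.1, u'), (u', v'), (u', v'), (v', e.2)} := by
    simp [hM, snprPlusResult]
  have hMV : M.V = insert u' (insert v' N.V) := by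
    simp [hM, snprPlusResult]
  have huM : u' ∈ M.V := by rw [hMV]; exact Finset.mem_insert_self _ _
  have huv'mem : ((u', v') : ℕ × ℕ) ∈ M.E := by
    rw [hME]; refine Multiset.mem_add.2 (Or.inr ?_); simp
  have hout : 1 ≤ M.outDeg u' := by
    rw [outDeg]; exact one_le_filtercard huv'mem rfl
  obtain ⟨w, hw, hwr⟩ := h u' huM hout
  rw [hME, Multiset.mem_add] at hw
  have hw' : w = v' := by
    rcases hw with hw | hw
    · exact absurd (mem_fst hN (Multiset.mem_of_mem_erase hw)) hu
    · simp only [Multiset.insert_eq_cons, Multiset.mem_cons, Multiset.mem_singleton] at hw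
      rcases hw with hw | hw | hw | hw
      · have h1 : u' = e.1 := (pair_eq hw).1
        exact absurd (h1.symm ▸ mem_fst hN he) hu
      · exact (pair_eq hw).2
      · exact (pair_eq hw).2
      · exact absurd (pair_eq hw).1 huv
  rw [hw'] at hwr
  apply hwr
  show M.inDeg v' = 2
  rw [inDeg, hME, Multiset.filter_add, Multiset.card_add]
  have h1 : (N.E.erase e).filter (fun g => g.2 = v') = 0 :=
    Multiset.filter_eq_nil.2
      (fun g hg hgv => hv (hgv ▸ mem_snd hN (Multiset.mem_of_mem_erase hg)))
  rw [h1]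
  have hne1 : ¬ (u' = v') := huv
  have hne2 : ¬ (e.2 = v') := fun h => hv (h ▸ mem_snd hN he)
  simp [Multiset.insert_eq_cons, Multiset.filter_cons, Multiset.filter_singleton, hne1, hne2,
    apply_ite Multiset.card]

lemma tc_iff (hN : N.IsPhylo) (htc : N.TreeChild) (he : e ∈ N.E) (hf : f ∈ N.E)
    (hef : e ≠ f) (hu : u' ∉ N.V) (hv : v' ∉ N.V) (huv : u' ≠ v') :
    (N.snprPlusResult e f u' v').TreeChild ↔ (N.PSedge e ∧ ¬ N.IsRet f.2) := by
  set M := N.snprPlusResult e f u' v' with hM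
  have hME : M.E = ((N.E.erase e).erase f)
      + {(e.1, v'), (v', e.2), (f.1, u'), (u', f.2), (u', v')} := by
    simp [hM, snprPlusResult, hef]
  have hMV : M.V = insert u' (insert v' N.V) := by
    simp [hM, snprPlusResult, hef]
  have he1V : e.1 ∈ N.V := mem_fst hN he
  have he2V : e.2 ∈ N.V := mem_snd hN he
  have hf1V : f.1 ∈ N.V := mem_fst hN hf
  have hf2V : f.2 ∈ N.V := mem_snd hN hf
  have hfE2 : f ∈ N.E.erase e := (Multiset.mem_erase_of_ne (Ne.symm hef)).2 hf
  have hE2sub : ∀ g ∈ (N.E.erase e).erase f, g ∈ N.E :=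
    fun g hg => Multiset.mem_of_mem_erase (Multiset.mem_of_mem_erase hg)
  have hEeq : N.E = e ::ₘ f ::ₘ ((N.E.erase e).erase f) := by
    rw [Multiset.cons_erase hfE2, Multiset.cons_erase he]
  have m1 : ((e.1, v') : ℕ × ℕ) ∈ M.E := by
    rw [hME]; refine Multiset.mem_add.2 (Or.inr ?_); simp
  have m2 : ((v', e.2) : ℕ × ℕ) ∈ M.E := by
    rw [hME]; refine Multiset.mem_add.2 (Or.inr ?_); simp
  have m3 : ((f.1, u') : ℕ × ℕ) ∈ M.E := by
    rw [hME]; refine Multiset.mem_add.2 (Or.inr ?_); simp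
  have m4 : ((u', f.2) : ℕ × ℕ) ∈ M.E := by
    rw [hME]; refine Multiset.mem_add.2 (Or.inr ?_); simp
  have hinv : ∀ x ∈ N.V, M.inDeg x = N.inDeg x := by
    intro x hx
    have hxu : ¬ (u' = x) := fun h => hu (h ▸ hx)
    have hxv : ¬ (v' = x) := fun h => hv (h ▸ hx)
    rw [inDeg, inDeg, hME, Multiset.filter_add, Multiset.card_add]
    conv_rhs => rw [hEeq, fcard_cons, fcard_cons]
    simp only [Multiset.insert_eq_cons, Multiset.filter_cons, Multiset.filter_singleton,
      Multiset.card_add, hxu, hxv, if_false, apply_ite Multiset.card, Multiset.card_singleton,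
      Multiset.card_zero, Multiset.empty_eq_zero]
    split_ifs <;> omega
  have hinv_out : ∀ x ∈ N.V, M.outDeg x = N.outDeg x := by
    intro x hx
    have hxu : ¬ (u' = x) := fun h => hu (h ▸ hx)
    have hxv : ¬ (v' = x) := fun h => hv (h ▸ hx)
    rw [outDeg, outDeg, hME, Multiset.filter_add, Multiset.card_add]
    conv_rhs => rw [hEeq, fcard_cons, fcard_cons]
    simp only [Multiset.insert_eq_cons, Multiset.filter_cons, Multiset.filter_singleton,
      Multiset.card_add, hxu, hxv, if_false, apply_ite Multiset.card, Multiset.card_singleton,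
      Multiset.card_zero, Multiset.empty_eq_zero]
    split_ifs <;> omega
  have hretinv : ∀ x ∈ N.V, (M.IsRet x ↔ N.IsRet x) := by
    intro x hx
    rw [IsRet, IsRet, hinv x hx]
  have hvin : M.inDeg v' = 2 := by
    rw [inDeg, hME, Multiset.filter_add, Multiset.card_add]
    have h1 : ((N.E.erase e).erase f).filter (fun g => g.2 = v') = 0 :=
      Multiset.filter_eq_nil.2 (fun g hg hgv => hv (hgv ▸ mem_snd hN (hE2sub g hg)))
    rw [h1]
    have h2 : ¬ (e.2 = v') := fun h => hv (h ▸ he2V)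
    have h3 : ¬ (f.2 = v') := fun h => hv (h ▸ hf2V)
    have h4 : ¬ (u' = v') := huv
    simp [Multiset.insert_eq_cons, Multiset.filter_cons, Multiset.filter_singleton,
      h2, h3, h4, apply_ite Multiset.card]
  have huin : M.inDeg u' = 1 := by
    rw [inDeg, hME, Multiset.filter_add, Multiset.card_add]
    have h1 : ((N.E.erase e).erase f).filter (fun g => g.2 = u') = 0 :=
      Multiset.filter_eq_nil.2 (fun g hg hgv => hu (hgv ▸ mem_snd hN (hE2sub g hg)))
    rw [h1]
    have h2 : ¬ (e.2 = u') := fun h => hu (h ▸ he2V)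
    have h3 : ¬ (f.2 = u') := fun h => hu (h ▸ hf2V)
    have h4 : ¬ (v' = u') := Ne.symm huv
    simp [Multiset.insert_eq_cons, Multiset.filter_cons, Multiset.filter_singleton,
      h2, h3, h4, apply_ite Multiset.card]
  have hMretv : M.IsRet v' := hvin
  have hMnotretu : ¬ M.IsRet u' := by
    intro h
    have h' : M.inDeg u' = 2 := h
    omega
  constructor
  · intro h
    -- f.2 is not a reticulation
    have hf2r : ¬ N.IsRet f.2 := by
      obtain ⟨w, hw, hwr⟩ := h u' (by rw [hMV]; exact Finset.mem_insert_self _ _)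
        (by rw [outDeg]; exact one_le_filtercard m4 rfl)
      rw [hME, Multiset.mem_add] at hw
      have hwf2 : w = f.2 := by
        rcases hw with hw | hw
        · exact absurd (mem_fst hN (hE2sub _ hw)) hu
        · simp only [Multiset.insert_eq_cons, Multiset.mem_cons, Multiset.mem_singleton] at hw
          rcases hw with hw | hw | hw | hw | hw
          · exact absurd ((pair_eq hw).1.symm ▸ he1V) hu
          · exact absurd (pair_eq hw).1 huv
          · exact absurd ((pair_eq hw).1.symm ▸ hf1V) hu
          · exact (pair_eq hw).2
          · exact absurd hMretv ((pair_eq hw).2 ▸ hwr)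
      subst hwf2
      exact fun hh => hwr ((hretinv f.2 hf2V).2 hh)
    -- e.2 is not a reticulation
    have he2r : ¬ N.IsRet e.2 := by
      obtain ⟨w, hw, hwr⟩ := h v'
        (by rw [hMV]; exact Finset.mem_insert_of_mem (Finset.mem_insert_self _ _))
        (by rw [outDeg]; exact one_le_filtercard m2 rfl)
      rw [hME, Multiset.mem_add] at hw
      have hwe2 : w = e.2 := by
        rcases hw with hw | hw
        · exact absurd (mem_fst hN (hE2sub _ hw)) hv
        · simp only [Multiset.insert_eq_cons, Multiset.mem_cons, Multiset.mem_singleton] at hw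
          rcases hw with hw | hw | hw | hw | hw
          · exact absurd ((pair_eq hw).1.symm ▸ he1V) hv
          · exact (pair_eq hw).2
          · exact absurd ((pair_eq hw).1.symm ▸ hf1V) hv
          · exact absurd (pair_eq hw).1 (Ne.symm huv)
          · exact absurd (pair_eq hw).1 (Ne.symm huv)
      subst hwe2
      exact fun hh => hwr ((hretinv e.2 he2V).2 hh)
    -- sibling edge of e
    have hsib : ∃ w2, (e.1, w2) ∈ N.E.erase e ∧ ¬ N.IsRet w2 := by
      obtain ⟨w, hw, hwr⟩ := h e.1
        (by rw [hMV]; exact Finset.mem_insert_of_mem (Finset.mem_insert_of_mem he1V))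
        (by rw [outDeg]; exact one_le_filtercard m1 rfl)
      rw [hME, Multiset.mem_add] at hw
      rcases hw with hw | hw
      · have hEe : (e.1, w) ∈ N.E.erase e := Multiset.mem_of_mem_erase hw
        have hwV : w ∈ N.V := mem_snd hN (hE2sub _ hw)
        exact ⟨w, hEe, fun hh => hwr ((hretinv w hwV).2 hh)⟩
      · simp only [Multiset.insert_eq_cons, Multiset.mem_cons, Multiset.mem_singleton] at hw
        rcases hw with hw | hw | hw | hw | hw
        · exact absurd hMretv ((pair_eq hw).2 ▸ hwr)
        · exact absurd ((pair_eq hw).1 ▸ he1V) hv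
        · refine ⟨f.2, ?_, hf2r⟩
          have hq : ((e.1, f.2) : ℕ × ℕ) = f := Prod.ext (pair_eq hw).1 rfl
          rw [hq]
          exact hfE2
        · exact absurd ((pair_eq hw).1 ▸ he1V) hu
        · exact absurd ((pair_eq hw).1 ▸ he1V) hu
    obtain ⟨w2, hw2, hw2r⟩ := hsib
    have hnr1 : ¬ N.IsRet e.1 := not_ret_of_two_le_outDeg hN he1V (two_le_outDeg he hw2)
    exact ⟨⟨⟨hnr1, he2r⟩, w2, hw2, hw2r⟩, hf2r⟩
  · rintro ⟨⟨⟨hnr1, hnr2⟩, w2, hw2, hw2r⟩, hf2r⟩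
    intro x hx hxout
    rw [hMV] at hx
    rcases Finset.mem_insert.1 hx with rfl | hx
    · exact ⟨f.2, m4, fun hh => hf2r ((hretinv f.2 hf2V).1 hh)⟩
    rcases Finset.mem_insert.1 hx with rfl | hx
    · exact ⟨e.2, m2, fun hh => hnr2 ((hretinv e.2 he2V).1 hh)⟩
    by_cases hxf : x = f.1
    · subst hxf
      exact ⟨u', m3, hMnotretu⟩
    by_cases hxe : x = e.1
    · subst hxe
      have hne : ((e.1, w2) : ℕ × ℕ) ≠ f := fun hq => hxf (show e.1 = f.1 by rw [← hq])
      have hmm : ((e.1, w2) : ℕ × ℕ) ∈ M.E := by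
        rw [hME]
        exact Multiset.mem_add.2 (Or.inl ((Multiset.mem_erase_of_ne hne).2 hw2))
      have hw2V : w2 ∈ N.V := mem_snd hN (Multiset.mem_of_mem_erase hw2)
      exact ⟨w2, hmm, fun hh => hw2r ((hretinv w2 hw2V).1 hh)⟩
    · have hxout' : 1 ≤ N.outDeg x := by rw [← hinv_out x hx]; exact hxout
      obtain ⟨w, hw, hwr⟩ := htc x hx hxout'
      have hne1 : ((x, w) : ℕ × ℕ) ≠ e := fun hq => hxe (show x = e.1 by rw [← hq])
      have hne2 : ((x, w) : ℕ × ℕ) ≠ f := fun hq => hxf (show x = f.1 by rw [← hq])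
      have hmm : ((x, w) : ℕ × ℕ) ∈ M.E := by
        rw [hME]
        exact Multiset.mem_add.2
          (Or.inl ((Multiset.mem_erase_of_ne hne2).2 ((Multiset.mem_erase_of_ne hne1).2 hw)))
      have hwV : w ∈ N.V := mem_snd hN hw
      exact ⟨w, hmm, fun hh => hwr ((hretinv w hwV).1 hh)⟩

end RawNet
namespace RawNet

variable {n : ℕ} {N : RawNet n} {e f : ℕ × ℕ}

lemma cond_iff (hN : N.IsPhylo) (htc : N.TreeChild) (he : e ∈ N.E) (hf : f ∈ N.E) :
    N.SNPRplusTcCond e f ↔ (¬ N.EdgeDesc e f ∧ N.PSedge e ∧ ¬ N.IsRet f.2 ∧ f ≠ e) := by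
  constructor
  · rintro ⟨h1, h2, u', v', hu, hv, huv, htcM⟩
    have hef : e ≠ f := by
      rintro rfl
      exact not_tc_diag hN he hu hv huv htcM
    obtain ⟨hPS, hf2⟩ := (tc_iff hN htc he hf hef hu hv huv).1 htcM
    exact ⟨h2, hPS, hf2, Ne.symm hef⟩
  · rintro ⟨h2, hPS, hf2, hfe⟩
    refine ⟨hPS.1.1, h2, N.V.sup id + 1, N.V.sup id + 2,
      fresh_not_mem N 1 (by omega), fresh_not_mem N 2 (by omega), by omega, ?_⟩
    exact (tc_iff hN htc he hf (Ne.symm hfe) (fresh_not_mem N 1 (by omega))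
      (fresh_not_mem N 2 (by omega)) (by omega)).2 ⟨hPS, hf2⟩

lemma count_zero (hN : N.IsPhylo) (htc : N.TreeChild) (he : e ∈ N.E)
    (hnotPS : ¬ N.PSedge e) :
    N.E.filter (fun f => N.SNPRplusTcCond e f) = 0 :=
  Multiset.filter_eq_nil.2 (fun f hf hc => hnotPS ((cond_iff hN htc he hf).1 hc).2.1)

lemma count_ps (hN : N.IsPhylo) (htc : N.TreeChild) (he : e ∈ N.E) (hPS : N.PSedge e) :
    (N.E.filter (fun f => N.SNPRplusTcCond e f)).card + (N.deltaT e + 1)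
      = (N.E.filter (fun g => ¬ N.IsRet g.2)).card := by
  have hsplit := congrArg Multiset.card
    (Multiset.filter_add_not (fun g => N.EdgeDesc e g) (N.E.filter (fun g => ¬ N.IsRet g.2)))
  rw [Multiset.card_add] at hsplit
  have hdT : N.deltaT e
      = ((N.E.filter (fun g => ¬ N.IsRet g.2)).filter (fun g => N.EdgeDesc e g)).card := by
    rw [deltaT, Multiset.filter_filter]
  have hTnd : (N.E.filter (fun g => ¬ N.IsRet g.2)).filter (fun g => ¬ N.EdgeDesc e g)
      = N.E.filter (fun g => ¬ N.EdgeDesc e g ∧ ¬ N.IsRet g.2) := by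
    rw [Multiset.filter_filter]
  have hmain : N.E.filter (fun f => N.SNPRplusTcCond e f)
      = (N.E.filter (fun g => ¬ N.EdgeDesc e g ∧ ¬ N.IsRet g.2)).filter (fun g => g ≠ e) := by
    rw [Multiset.filter_filter]
    refine Multiset.filter_congr (fun g hg => ?_)
    rw [cond_iff hN htc he hg]
    constructor
    · rintro ⟨hd, _, hr, hne⟩; exact ⟨hne, hd, hr⟩
    · rintro ⟨hne, hd, hr⟩; exact ⟨hd, hPS, hr, hne⟩
  have hce : (N.E.filter (fun g => ¬ N.EdgeDesc e g ∧ ¬ N.IsRet g.2)).count e = 1 := by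
    rw [Multiset.count_filter, if_pos ⟨not_edgeDesc_self hN he, hPS.1.2⟩]
    exact count_eq_one hN he hPS.1.2
  have hcard : ((N.E.filter (fun g => ¬ N.EdgeDesc e g ∧ ¬ N.IsRet g.2)).filter
        (fun g => g ≠ e)).card + 1
      = (N.E.filter (fun g => ¬ N.EdgeDesc e g ∧ ¬ N.IsRet g.2)).card := by
    have hsp := congrArg Multiset.card (Multiset.filter_add_not (fun g => g ≠ e)
      (N.E.filter (fun g => ¬ N.EdgeDesc e g ∧ ¬ N.IsRet g.2)))
    rw [Multiset.card_add] at hsp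
    have h9 : (N.E.filter (fun g => ¬ N.EdgeDesc e g ∧ ¬ N.IsRet g.2)).filter
          (fun g => ¬ g ≠ e)
        = (N.E.filter (fun g => ¬ N.EdgeDesc e g ∧ ¬ N.IsRet g.2)).filter (fun g => g = e) :=
      Multiset.filter_congr (fun g _ => by tauto)
    rw [h9, Multiset.filter_eq', Multiset.card_replicate, hce] at hsp
    omega
  rw [hmain, hdT]
  rw [hTnd] at hsplit
  omega

lemma total_eq (hN : N.IsPhylo) (htc : N.TreeChild) :
    N.numSNPRplusTc + N.sumDeltaT_PS + (N.E.filter (fun e => N.PSedge e)).card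
      = (N.E.filter (fun e => N.PSedge e)).card
        * (N.E.filter (fun g => ¬ N.IsRet g.2)).card := by
  have hsplitE := Multiset.filter_add_not (fun g => N.PSedge g) N.E
  set F : ℕ × ℕ → ℕ := fun e => (N.E.filter (fun f => N.SNPRplusTcCond e f)).card with hF
  have h1 : ((N.E.filter (fun g => N.PSedge g)).map F).sum
      + ((N.E.filter (fun a => ¬ N.PSedge a)).map F).sum = N.numSNPRplusTc := by
    rw [← Multiset.sum_add, ← Multiset.map_add, hsplitE, numSNPRplusTc, hF]
  have h2 : ((N.E.filter (fun a => ¬ N.PSedge a)).map F).sum = 0 := by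
    apply Multiset.sum_eq_zero
    intro x hx
    obtain ⟨e, he, rfl⟩ := Multiset.mem_map.1 hx
    obtain ⟨heE, henot⟩ := Multiset.mem_filter.1 he
    show (N.E.filter (fun f => N.SNPRplusTcCond e f)).card = 0
    rw [count_zero hN htc heE henot, Multiset.card_zero]
  have h3 : ((N.E.filter (fun g => N.PSedge g)).map
        (fun e => F e + (N.deltaT e + 1))).sum
      = ((N.E.filter (fun g => N.PSedge g)).map
        (fun _ => (N.E.filter (fun g => ¬ N.IsRet g.2)).card)).sum := by
    apply congrArg
    apply Multiset.map_congr rfl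
    intro e he
    obtain ⟨heE, hePS⟩ := Multiset.mem_filter.1 he
    exact count_ps hN htc heE hePS
  rw [Multiset.sum_map_add] at h3
  have h4 : ((N.E.filter (fun g => N.PSedge g)).map (fun e => N.deltaT e + 1)).sum
      = N.sumDeltaT_PS + (N.E.filter (fun g => N.PSedge g)).card := by
    rw [Multiset.sum_map_add, sumDeltaT_PS]
    congr 1
    rw [Multiset.map_const', Multiset.sum_replicate, smul_eq_mul, mul_one]
  have h5 : ((N.E.filter (fun g => N.PSedge g)).map
        (fun _ => (N.E.filter (fun g => ¬ N.IsRet g.2)).card)).sum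
      = (N.E.filter (fun g => N.PSedge g)).card
        * (N.E.filter (fun g => ¬ N.IsRet g.2)).card := by
    rw [Multiset.map_const', Multiset.sum_replicate, smul_eq_mul]
  rw [h4, h5] at h3
  rw [← h1, h2]
  omega

end RawNet

/-- The number of tree-child respecting SNPR+ operations on a tree-child
network `N` with `n` leaves and `r` reticulations equals
`4n² − 2nr − 8n − 2r² + 2r + 4 − Σ_{e ∈ E_{PS}} δ_T(e)`. -/
theorem numSNPRplusTc_eq (n : ℕ) (hn : 2 ≤ n) (N : RawNet n)
    (hN : N.IsPhylo) (htc : N.TreeChild) :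
    (N.numSNPRplusTc : ℤ) =
      4 * (n : ℤ) ^ 2 - 2 * (n : ℤ) * (N.numRet : ℤ) - 8 * (n : ℤ)
        - 2 * (N.numRet : ℤ) ^ 2 + 2 * (N.numRet : ℤ) + 4
        - (N.sumDeltaT_PS : ℤ) := by
  obtain ⟨hc1, hc2⟩ := N.edge_count_eqs hN
  have hts := N.innerT_split hN htc
  have hps := N.PS_card hN htc
  have hte := N.tree_edges_card hN
  have htot := N.total_eq hN htc
  have e1 : (N.E.card : ℤ) = n + N.innerT.card + 2 * N.numRet := by exact_mod_cast hc1
  have e2 : (N.E.card : ℤ) = 1 + 2 * N.innerT.card + N.numRet := by exact_mod_cast hc2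
  have e3 : (N.innerT.card : ℤ) = N.Bset.card + 2 * N.numRet := by exact_mod_cast hts
  have e4 : ((N.E.filter (fun e => N.PSedge e)).card : ℤ) = 2 * N.Bset.card := by
    exact_mod_cast hps
  have e5 : (N.E.card : ℤ)
      = (N.E.filter (fun g => ¬ N.IsRet g.2)).card + 2 * N.numRet := by exact_mod_cast hte
  have e6 : (N.numSNPRplusTc : ℤ) + N.sumDeltaT_PS + (N.E.filter (fun e => N.PSedge e)).card
      = ((N.E.filter (fun e => N.PSedge e)).card : ℤ)
        * (N.E.filter (fun g => ¬ N.IsRet g.2)).card := by exact_mod_cast htot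
  have hPSc : ((N.E.filter (fun e => N.PSedge e)).card : ℤ)
      = 2 * (n : ℤ) - 2 * N.numRet - 2 := by linarith
  have hTEc : ((N.E.filter (fun g => ¬ N.IsRet g.2)).card : ℤ)
      = 2 * (n : ℤ) + N.numRet - 1 := by linarith
  have e6' : (N.numSNPRplusTc : ℤ)
      = (2 * (n : ℤ) - 2 * N.numRet - 2) * (2 * (n : ℤ) + N.numRet - 1)
        - N.sumDeltaT_PS - (2 * (n : ℤ) - 2 * N.numRet - 2) := by
    rw [← hPSc, ← hTEc]
    linarith
  rw [e6']
  ring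
end
end

section
/- Let N be a tree-child network on n ≥ 2 leaves with r reticulations. Then the number of tree-child respecting SNPR− operations on N equals 2r; that is, every SNPR− operation on N (deleting one of the 2r reticulation edges and suppressing the two resulting degree-two vertices) yields a tree-child network. -/
/-!
Formalization of rooted binary phylogenetic networks (directed multigraphs with
labelled leaves), tree-child networks, and the SNPR / SNPR+ / SNPR− rearrangement
operations, following Klawitter, "The SNPR neighbourhood of tree-child networks".
-/

noncomputable section

attribute [local instance] Classical.propDecidable

namespace RawNet

variable {n : ℕ} {N : RawNet n}

lemma count_erase'' {α : Type*} [DecidableEq α] (a b : α) (s : Multiset α) :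
    Multiset.count a (s.erase b) = Multiset.count a s - if a = b then 1 else 0 := by
  by_cases h : a = b
  · subst h; simp [Multiset.count_erase_self]
  · simp [Multiset.count_erase_of_ne h, h]

lemma adj_ne (hN : N.IsPhylo) {x y : ℕ} (h : (x, y) ∈ N.E) : x ≠ y := by
  intro hxy
  subst hxy
  exact hN.acyclic x (Relation.TransGen.single (show N.Adj x x from h))

lemma no_two_cycle (hN : N.IsPhylo) {x y : ℕ} (h1 : (x, y) ∈ N.E) (h2 : (y, x) ∈ N.E) :
    False :=
  hN.acyclic x (Relation.TransGen.head (show N.Adj x y from h1)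
    (Relation.TransGen.single (show N.Adj y x from h2)))

lemma outDeg_pos {x y : ℕ} (h : (x, y) ∈ N.E) : 0 < N.outDeg x :=
  Multiset.card_pos_iff_exists_mem.2 ⟨(x, y), Multiset.mem_filter.2 ⟨h, rfl⟩⟩

lemma inDeg_pos {x y : ℕ} (h : (x, y) ∈ N.E) : 0 < N.inDeg y :=
  Multiset.card_pos_iff_exists_mem.2 ⟨(x, y), Multiset.mem_filter.2 ⟨h, rfl⟩⟩

lemma exists_out {x : ℕ} (h : 0 < N.outDeg x) : ∃ y, (x, y) ∈ N.E := by
  obtain ⟨⟨g1, g2⟩, hg⟩ := Multiset.card_pos_iff_exists_mem.1 h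
  rw [Multiset.mem_filter] at hg
  have h1 : g1 = x := hg.2
  subst h1
  exact ⟨g2, hg.1⟩

lemma exists_in {y : ℕ} (h : 0 < N.inDeg y) : ∃ x, (x, y) ∈ N.E := by
  obtain ⟨⟨g1, g2⟩, hg⟩ := Multiset.card_pos_iff_exists_mem.1 h
  rw [Multiset.mem_filter] at hg
  have h1 : g2 = y := hg.2
  subst h1
  exact ⟨g1, hg.1⟩

lemma exists_second_out {u v : ℕ} (h2 : N.outDeg u = 2) (he : (u, v) ∈ N.E) :
    ∃ w, (u, w) ∈ N.E.erase (u, v) := by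
  have hmemF : (u, v) ∈ N.E.filter (fun e => e.1 = u) := Multiset.mem_filter.2 ⟨he, rfl⟩
  have hcard : 0 < ((N.E.filter (fun e => e.1 = u)).erase (u, v)).card := by
    rw [Multiset.card_erase_of_mem hmemF]
    have h2' : (N.E.filter (fun e => e.1 = u)).card = 2 := h2
    rw [h2']
    decide
  obtain ⟨⟨g1, g2⟩, hg⟩ := Multiset.card_pos_iff_exists_mem.1 hcard
  have hgE : (g1, g2) ∈ N.E.erase (u, v) :=
    Multiset.mem_of_le (Multiset.erase_le_erase _ (Multiset.filter_le _ _)) hg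
  have hgF := Multiset.mem_of_mem_erase hg
  rw [Multiset.mem_filter] at hgF
  have h1 : g1 = u := hgF.2
  subst h1
  exact ⟨g2, hgE⟩

lemma exists_second_in {u v : ℕ} (h2 : N.inDeg v = 2) (he : (u, v) ∈ N.E) :
    ∃ c, (c, v) ∈ N.E.erase (u, v) := by
  have hmemF : (u, v) ∈ N.E.filter (fun e => e.2 = v) := Multiset.mem_filter.2 ⟨he, rfl⟩
  have hcard : 0 < ((N.E.filter (fun e => e.2 = v)).erase (u, v)).card := by
    rw [Multiset.card_erase_of_mem hmemF]
    have h2' : (N.E.filter (fun e => e.2 = v)).card = 2 := h2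
    rw [h2']
    decide
  obtain ⟨⟨g1, g2⟩, hg⟩ := Multiset.card_pos_iff_exists_mem.1 hcard
  have hgE : (g1, g2) ∈ N.E.erase (u, v) :=
    Multiset.mem_of_le (Multiset.erase_le_erase _ (Multiset.filter_le _ _)) hg
  have hgF := Multiset.mem_of_mem_erase hg
  rw [Multiset.mem_filter] at hgF
  have h1 : g2 = v := hgF.2
  subst h1
  exact ⟨g1, hgE⟩

lemma filter_in_eq_singleton {u a : ℕ} (h1 : N.inDeg u = 1) (ha : (a, u) ∈ N.E) :
    N.E.filter (fun e => e.2 = u) = {(a, u)} := by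
  obtain ⟨g, hg⟩ := Multiset.card_eq_one.1 h1
  have hmem : (a, u) ∈ N.E.filter (fun e => e.2 = u) := Multiset.mem_filter.2 ⟨ha, rfl⟩
  rw [hg] at hmem ⊢
  rw [Multiset.mem_singleton] at hmem
  rw [hmem]

lemma filter_out_eq_singleton {v z : ℕ} (h1 : N.outDeg v = 1) (hz : (v, z) ∈ N.E) :
    N.E.filter (fun e => e.1 = v) = {(v, z)} := by
  obtain ⟨g, hg⟩ := Multiset.card_eq_one.1 h1
  have hmem : (v, z) ∈ N.E.filter (fun e => e.1 = v) := Multiset.mem_filter.2 ⟨hz, rfl⟩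
  rw [hg] at hmem ⊢
  rw [Multiset.mem_singleton] at hmem
  rw [hmem]

lemma filter_out_eq_pair {u v w : ℕ} (h2 : N.outDeg u = 2) (hv : (u, v) ∈ N.E)
    (hw : (u, w) ∈ N.E.erase (u, v)) :
    N.E.filter (fun e => e.1 = u) = {(u, v), (u, w)} := by
  have hwE : (u, w) ∈ N.E := Multiset.mem_of_mem_erase hw
  have hle : ({(u, v), (u, w)} : Multiset (ℕ × ℕ)) ≤ N.E.filter (fun e => e.1 = u) := by
    rw [Multiset.le_iff_count]
    intro g
    rw [Multiset.count_filter]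
    by_cases hgv : g = (u, v)
    · subst hgv
      by_cases hvw : ((u, v) : ℕ × ℕ) = (u, w)
      · rw [← hvw] at hw
        have hc : 2 ≤ Multiset.count ((u, v) : ℕ × ℕ) N.E := by
          have h1 := Multiset.count_pos.2 hw
          rw [Multiset.count_erase_self] at h1
          omega
        rw [← hvw]
        simp [Multiset.insert_eq_cons, Multiset.count_cons, Multiset.count_singleton]
        omega
      · have hc : 1 ≤ Multiset.count ((u, v) : ℕ × ℕ) N.E := Multiset.count_pos.2 hv
        simp [Multiset.insert_eq_cons, Multiset.count_cons, Multiset.count_singleton, hvw]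
        omega
    · by_cases hgw : g = (u, w)
      · subst hgw
        have hc : 1 ≤ Multiset.count ((u, w) : ℕ × ℕ) N.E := Multiset.count_pos.2 hwE
        simp [Multiset.insert_eq_cons, Multiset.count_cons, Multiset.count_singleton, hgv]
        omega
      · simp [Multiset.insert_eq_cons, Multiset.count_cons, Multiset.count_singleton, hgv, hgw]
  refine (Multiset.eq_of_le_of_card_le hle ?_).symm
  have h2' : (N.E.filter (fun e => e.1 = u)).card = 2 := h2
  rw [h2']
  simp

lemma filter_in_eq_pair {u v c : ℕ} (h2 : N.inDeg v = 2) (hu : (u, v) ∈ N.E)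
    (hc : (c, v) ∈ N.E.erase (u, v)) :
    N.E.filter (fun e => e.2 = v) = {(u, v), (c, v)} := by
  have hcE : (c, v) ∈ N.E := Multiset.mem_of_mem_erase hc
  have hle : ({(u, v), (c, v)} : Multiset (ℕ × ℕ)) ≤ N.E.filter (fun e => e.2 = v) := by
    rw [Multiset.le_iff_count]
    intro g
    rw [Multiset.count_filter]
    by_cases hgv : g = (u, v)
    · subst hgv
      by_cases hvw : ((u, v) : ℕ × ℕ) = (c, v)
      · rw [← hvw] at hc
        have hc1 : 2 ≤ Multiset.count ((u, v) : ℕ × ℕ) N.E := by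
          have h1 := Multiset.count_pos.2 hc
          rw [Multiset.count_erase_self] at h1
          omega
        rw [← hvw]
        simp [Multiset.insert_eq_cons, Multiset.count_cons, Multiset.count_singleton]
        omega
      · have hc1 : 1 ≤ Multiset.count ((u, v) : ℕ × ℕ) N.E := Multiset.count_pos.2 hu
        simp [Multiset.insert_eq_cons, Multiset.count_cons, Multiset.count_singleton, hvw]
        omega
    · by_cases hgw : g = (c, v)
      · subst hgw
        have hc1 : 1 ≤ Multiset.count ((c, v) : ℕ × ℕ) N.E := Multiset.count_pos.2 hcE
        simp [Multiset.insert_eq_cons, Multiset.count_cons, Multiset.count_singleton, hgv]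
        omega
      · simp [Multiset.insert_eq_cons, Multiset.count_cons, Multiset.count_singleton, hgv, hgw]
  refine (Multiset.eq_of_le_of_card_le hle ?_).symm
  have h2' : (N.E.filter (fun e => e.2 = v)).card = 2 := h2
  rw [h2']
  simp

lemma ret_out (hN : N.IsPhylo) {v : ℕ} (hvV : v ∈ N.V) (hv : N.IsRet v) :
    N.outDeg v = 1 := by
  have hv' : N.inDeg v = 2 := hv
  rcases hN.classify v hvV with h | ⟨i, h⟩ | ⟨h1, _⟩ | ⟨_, h2⟩
  · rw [h, hN.root_in] at hv'; omega
  · rw [h, hN.leaf_in i] at hv'; omega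
  · omega
  · exact h2

lemma ret_parent_deg (hN : N.IsPhylo) (htc : N.TreeChild) {u v : ℕ}
    (he : (u, v) ∈ N.E) (hv : N.IsRet v) :
    ¬ N.IsRet u ∧ N.inDeg u = 1 ∧ N.outDeg u = 2 := by
  have huV : u ∈ N.V := (hN.edge_mem _ he).1
  have hout1 : N.outDeg u ≠ 1 := by
    intro h1
    obtain ⟨y, hy, hyr⟩ := htc u huV (by have := outDeg_pos he; omega)
    have hmem : (u, y) ∈ N.E.filter (fun e => e.1 = u) := Multiset.mem_filter.2 ⟨hy, rfl⟩
    rw [filter_out_eq_singleton h1 he, Multiset.mem_singleton] at hmem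
    have : y = v := by
      have := congrArg Prod.snd hmem
      simpa using this
    exact hyr (this ▸ hv)
  have houtpos := outDeg_pos he
  rcases hN.classify u huV with h | ⟨i, h⟩ | ⟨h1, h2⟩ | ⟨_, h2⟩
  · rw [h] at hout1; exact absurd hN.root_out hout1
  · rw [h] at houtpos; rw [hN.leaf_out i] at houtpos; omega
  · exact ⟨by simp only [IsRet]; omega, h1, h2⟩
  · exact absurd h2 hout1

/-- The core lemma: any SNPR− operation on a tree-child network yields a tree-child
network. -/
lemma snprMinus_treeChild (hN : N.IsPhylo) (htc : N.TreeChild) {u v a w c z : ℕ}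
    (he : (u, v) ∈ N.E) (hv : N.IsRet v)
    (ha : (a, u) ∈ N.E) (hw : (u, w) ∈ N.E.erase (u, v))
    (hc : (c, v) ∈ N.E.erase (u, v)) (hz : (v, z) ∈ N.E) :
    (N.snprMinusResult u v a w c z).TreeChild := by
  obtain ⟨huR, hu1, hu2⟩ := ret_parent_deg hN htc he hv
  have hv2 : N.inDeg v = 2 := hv
  have huV : u ∈ N.V := (hN.edge_mem _ he).1
  have hvV : v ∈ N.V := (hN.edge_mem _ he).2
  have hv1 : N.outDeg v = 1 := ret_out hN hvV hv
  have hwE : (u, w) ∈ N.E := Multiset.mem_of_mem_erase hw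
  have hcE : (c, v) ∈ N.E := Multiset.mem_of_mem_erase hc
  -- distinctness facts
  have huv : u ≠ v := adj_ne hN he
  have hau : a ≠ u := adj_ne hN ha
  have hvz : v ≠ z := adj_ne hN hz
  have huw : u ≠ w := adj_ne hN hwE
  have hcv : c ≠ v := adj_ne hN hcE
  have hav : a ≠ v := fun h => no_two_cycle hN he (h ▸ ha)
  have hzu : z ≠ u := fun h => no_two_cycle hN he (h ▸ hz)
  -- filter characterizations
  have Fout_u := filter_out_eq_pair hu2 he hw
  have Fin_u := filter_in_eq_singleton hu1 ha
  have Fin_v := filter_in_eq_pair hv2 he hc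
  have Fout_v := filter_out_eq_singleton hv1 hz
  -- the sibling w and the child z are tree vertices
  have hwR : ¬ N.IsRet w := by
    obtain ⟨y, hy, hyr⟩ := htc u huV (by have := outDeg_pos he; omega)
    have hmem : (u, y) ∈ N.E.filter (fun e => e.1 = u) := Multiset.mem_filter.2 ⟨hy, rfl⟩
    rw [Fout_u] at hmem
    rcases Multiset.mem_cons.1 hmem with h | h
    · exfalso
      have : y = v := by have := congrArg Prod.snd h; simpa using this
      exact hyr (this ▸ hv)
    · rw [Multiset.mem_singleton] at h
      have : y = w := by have := congrArg Prod.snd h; simpa using this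
      exact this ▸ hyr
  have hzR : ¬ N.IsRet z := by
    obtain ⟨y, hy, hyr⟩ := htc v hvV (by have := outDeg_pos hz; omega)
    have hmem : (v, y) ∈ N.E.filter (fun e => e.1 = v) := Multiset.mem_filter.2 ⟨hy, rfl⟩
    rw [Fout_v, Multiset.mem_singleton] at hmem
    have : y = z := by have := congrArg Prod.snd hmem; simpa using this
    exact this ▸ hyr
  have hwv : w ≠ v := fun h => hwR (h ▸ hv)
  -- count of (u,v) in E is 1, hence u ≠ c
  have hcnt_uv : Multiset.count ((u, v) : ℕ × ℕ) N.E = 1 := by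
    have h1 : Multiset.count ((u, v) : ℕ × ℕ) (N.E.filter (fun e => e.1 = u))
        = Multiset.count ((u, v) : ℕ × ℕ) N.E := by
      rw [Multiset.count_filter, if_pos rfl]
    rw [Fout_u] at h1
    rw [← h1]
    simp [Multiset.insert_eq_cons, Multiset.count_cons, Multiset.count_singleton,
      Prod.mk.injEq, hwv.symm]
  have huc : u ≠ c := by
    intro h
    rw [← h] at hc
    have := Multiset.count_pos.2 hc
    rw [Multiset.count_erase_self, hcnt_uv] at this
    omega
  have hzv : z ≠ v := fun h => hvz h.symm
  -- the removed and added edge multisets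
  set D : Multiset (ℕ × ℕ) := {(u, v), (a, u), (u, w), (c, v), (v, z)} with hD
  set A : Multiset (ℕ × ℕ) := {(a, w), (c, z)} with hA
  have hED : (((((N.E.erase (u, v)).erase (a, u)).erase (u, w)).erase (c, v)).erase (v, z))
      = N.E - D := by
    apply Multiset.ext'
    intro g
    rw [Multiset.count_sub, hD]
    simp only [count_erase'', Multiset.insert_eq_cons, Multiset.count_cons,
      Multiset.count_singleton]
    split_ifs <;> omega
  have hDnodup : D.Nodup := by
    rw [hD]
    simp only [Multiset.insert_eq_cons, Multiset.nodup_cons, Multiset.mem_cons,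
      Multiset.mem_singleton, Multiset.nodup_singleton, Prod.mk.injEq, and_true]
    omega
  have hDsub : D ⊆ N.E := by
    intro g hg
    rw [hD] at hg
    simp only [Multiset.insert_eq_cons, Multiset.mem_cons, Multiset.mem_singleton] at hg
    rcases hg with h | h | h | h | h <;> rw [h]
    exacts [he, ha, hwE, hcE, hz]
  have hD_le : D ≤ N.E := (Multiset.le_iff_subset hDnodup).2 hDsub
  set M := N.snprMinusResult u v a w c z with hM
  have hMV : M.V = (N.V.erase u).erase v := by
    rw [hM, snprMinusResult, if_neg huc]
  have hME : M.E = N.E - D + A := by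
    rw [hM, snprMinusResult, if_neg huc]
    show (((((N.E.erase (u, v)).erase (a, u)).erase (u, w)).erase (c, v)).erase (v, z))
        + {(a, w), (c, z)} = N.E - D + A
    rw [hED, hA]
  -- reticulations are preserved away from u and v
  have hRet : ∀ y, y ≠ u → y ≠ v → (M.IsRet y ↔ N.IsRet y) := by
    intro y hyu hyv
    have hin : M.inDeg y = N.inDeg y := by
      have h1 : M.inDeg y = (N.E.filter (fun e => e.2 = y)).card
          - (D.filter (fun e => e.2 = y)).card + (A.filter (fun e => e.2 = y)).card := by
        show (M.E.filter (fun e => e.2 = y)).card = _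
        rw [hME, Multiset.filter_add, Multiset.filter_sub, Multiset.card_add,
          Multiset.card_sub (Multiset.filter_le_filter _ hD_le)]
      have h2 : (D.filter (fun e => e.2 = y)).card = (A.filter (fun e => e.2 = y)).card := by
        rw [hD, hA]
        by_cases hwy : w = y <;> by_cases hzy : z = y <;>
          simp [Multiset.insert_eq_cons, Multiset.filter_cons, Multiset.filter_singleton,
            hwy, hzy, Ne.symm hyu, Ne.symm hyv]
      have h3 : (D.filter (fun e => e.2 = y)).card ≤ (N.E.filter (fun e => e.2 = y)).card :=
        Multiset.card_le_card (Multiset.filter_le_filter _ hD_le)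
      have h4 : N.inDeg y = (N.E.filter (fun e => e.2 = y)).card := rfl
      rw [h1, h4]
      omega
    show M.inDeg y = 2 ↔ N.inDeg y = 2
    rw [hin]
  have hawM : (a, w) ∈ M.E := by
    rw [hME]
    exact Multiset.mem_add.2 (Or.inr (by rw [hA]; simp))
  have hczM : (c, z) ∈ M.E := by
    rw [hME]
    exact Multiset.mem_add.2 (Or.inr (by rw [hA]; simp))
  -- now prove tree-child
  intro x hxV hxOut
  rw [hMV, Finset.mem_erase, Finset.mem_erase] at hxV
  obtain ⟨hxv, hxu, hxN⟩ := hxV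
  by_cases hxa : x = a
  · subst hxa
    exact ⟨w, hawM, by rw [hRet w (Ne.symm huw) hwv]; exact hwR⟩
  by_cases hxc : x = c
  · subst hxc
    exact ⟨z, hczM, by rw [hRet z hzu hzv]; exact hzR⟩
  -- generic vertex
  obtain ⟨y, hy⟩ := exists_out (N := M) (x := x) (by omega)
  have hxE : ∃ y₀, (x, y₀) ∈ N.E := by
    rw [hME] at hy
    rcases Multiset.mem_add.1 hy with h | h
    · exact ⟨y, Multiset.mem_of_le tsub_le_self h⟩
    · exfalso
      rw [hA] at h
      simp only [Multiset.insert_eq_cons, Multiset.mem_cons, Multiset.mem_singleton] at h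
      rcases h with h | h
      · exact hxa (by have := congrArg Prod.fst h; simpa using this)
      · exact hxc (by have := congrArg Prod.fst h; simpa using this)
  obtain ⟨y₀, hy₀⟩ := hxE
  obtain ⟨y', hy', hy'R⟩ := htc x hxN (by have := outDeg_pos hy₀; omega)
  have hy'u : y' ≠ u := by
    intro h
    have hy'' : (x, u) ∈ N.E := h ▸ hy'
    have hmem : (x, u) ∈ N.E.filter (fun e => e.2 = u) := Multiset.mem_filter.2 ⟨hy'', rfl⟩
    rw [Fin_u, Multiset.mem_singleton] at hmem
    exact hxa (by have := congrArg Prod.fst hmem; simpa using this)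
  have hy'v : y' ≠ v := by
    intro h
    have hy'' : (x, v) ∈ N.E := h ▸ hy'
    have hmem : (x, v) ∈ N.E.filter (fun e => e.2 = v) := Multiset.mem_filter.2 ⟨hy'', rfl⟩
    rw [Fin_v] at hmem
    rcases Multiset.mem_cons.1 hmem with h | h
    · exact hxu (by have := congrArg Prod.fst h; simpa using this)
    · rw [Multiset.mem_singleton] at h
      exact hxc (by have := congrArg Prod.fst h; simpa using this)
  refine ⟨y', ?_, by rw [hRet y' hy'u hy'v]; exact hy'R⟩
  rw [hME]
  refine Multiset.mem_add.2 (Or.inl ?_)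
  rw [← Multiset.count_pos, Multiset.count_sub]
  have hcD : Multiset.count ((x, y') : ℕ × ℕ) D = 0 := by
    rw [hD]
    simp [Multiset.insert_eq_cons, Multiset.count_cons, Multiset.count_singleton,
      Prod.mk.injEq, hxu, hxa, hxc, hxv]
  have hpos := Multiset.count_pos.2 hy'
  omega

end RawNet

/-- The number of tree-child respecting SNPR− operations on a tree-child
network `N` with `r` reticulations equals `2r`; that is, deleting any of the `2r`
reticulation edges (and suppressing the two resulting degree-two vertices) yields a
tree-child network. -/
theorem numSNPRminusTc_eq (n : ℕ) (hn : 2 ≤ n) (N : RawNet n)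
    (hN : N.IsPhylo) (htc : N.TreeChild) :
    N.numSNPRminusTc = 2 * N.numRet ∧
    ∀ e ∈ N.E, N.IsRet e.2 → ¬ N.IsRet e.1 →
      ∀ a w c z, (a, e.1) ∈ N.E → (e.1, w) ∈ N.E.erase e → (c, e.2) ∈ N.E.erase e →
        (e.2, z) ∈ N.E → (N.snprMinusResult e.1 e.2 a w c z).TreeChild := by
  constructor
  · -- the count
    show (N.E.filter (fun e => N.SNPRminusTcCond e)).card = 2 * N.numRet
    have hfe : N.E.filter (fun e => N.SNPRminusTcCond e)
        = N.E.filter (fun e => N.IsRet e.2) := by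
      apply Multiset.filter_congr
      rintro ⟨u, v⟩ heE
      constructor
      · rintro ⟨h, -⟩; exact h
      · intro hret
        have hret' : N.IsRet v := hret
        obtain ⟨huR, hu1, hu2⟩ := RawNet.ret_parent_deg hN htc heE hret'
        refine ⟨hret', huR, ?_⟩
        obtain ⟨a, ha⟩ := RawNet.exists_in (N := N) (y := u) (by omega)
        obtain ⟨w, hw⟩ := RawNet.exists_second_out hu2 heE
        obtain ⟨c, hc⟩ := RawNet.exists_second_in hret' heE
        have hv1 : N.outDeg v = 1 := RawNet.ret_out hN (hN.edge_mem _ heE).2 hret'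
        obtain ⟨z, hz⟩ := RawNet.exists_out (N := N) (x := v) (by omega)
        exact ⟨a, w, c, z, ha, hw, hc, hz,
          RawNet.snprMinus_treeChild hN htc heE hret' ha hw hc hz⟩
    rw [hfe]
    -- card of reticulation edges = 2 r
    have hbind : N.E.filter (fun e => N.IsRet e.2)
        = (N.V.filter (fun v => N.IsRet v)).val.bind
            (fun v => N.E.filter (fun e => e.2 = v)) := by
      apply Multiset.ext'
      intro g
      rw [Multiset.count_bind, Multiset.count_filter]
      have hterm : ∀ v, Multiset.count g (N.E.filter (fun e => e.2 = v))
          = if g.2 = v then Multiset.count g N.E else 0 := fun v => Multiset.count_filter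
      simp only [hterm]
      have hsum : ((N.V.filter (fun v => N.IsRet v)).val.map
            (fun v => if g.2 = v then Multiset.count g N.E else 0)).sum
          = ∑ v ∈ N.V.filter (fun v => N.IsRet v),
              (if g.2 = v then Multiset.count g N.E else 0) := rfl
      rw [hsum, Finset.sum_ite_eq]
      by_cases hg : g ∈ N.E
      · have hmemiff : g.2 ∈ N.V.filter (fun v => N.IsRet v) ↔ N.IsRet g.2 := by
          simp [Finset.mem_filter, (hN.edge_mem g hg).2]
        by_cases hr : N.IsRet g.2
        · rw [if_pos hr, if_pos (hmemiff.2 hr)]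
        · rw [if_neg hr, if_neg (fun h => hr (hmemiff.1 h))]
      · have hc0 : Multiset.count g N.E = 0 := by rwa [Multiset.count_eq_zero]
        rw [hc0]
        simp
    rw [hbind, Multiset.card_bind]
    have hmap : (N.V.filter (fun v => N.IsRet v)).val.map
          (Multiset.card ∘ fun v => N.E.filter (fun e => e.2 = v))
        = (N.V.filter (fun v => N.IsRet v)).val.map (fun _ => 2) := by
      apply Multiset.map_congr rfl
      intro v hv
      have : N.IsRet v := (Finset.mem_filter.1 hv).2
      exact this
    rw [hmap]
    show ((N.V.filter (fun v => N.IsRet v)).val.map (fun _ => 2)).sum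
        = 2 * (N.V.filter (fun v => N.IsRet v)).card
    rw [Multiset.map_const', Multiset.sum_replicate, smul_eq_mul, mul_comm]
    rfl
  · rintro ⟨u, v⟩ he hret hnr a w c z ha hw hc hz
    exact RawNet.snprMinus_treeChild hN htc he hret ha hw hc hz
end
end
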